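/- arXiv:2208.03810 — 2 statements merged into one kernel-verified Lean document; each statement's English description precedes it below -/
import Mathlib

section
/- Let f : {0,1}^n → {0,1} be a monotone read-once DNF with m terms each containing exactly n/m variables (so every variable appears in exactly one term). Under unit costs and an arbitrary probability vector p ∈ (0,1)^n, there is a non-adaptive strategy S whose expected cost is at most (n/m) · OPT_A(f, unit costs, p). -/
open Finset

/-- The set of tested indices `T` determines `f` on input `x`:
every input agreeing with `x` on `T` gives the same function value. -/
def Determines (n : ℕ) (f : (Fin n → Bool) → Bool) (T : Finset (Fin n))
    (x : Fin n → Bool) : Prop :=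
  ∀ x' : Fin n → Bool, (∀ i ∈ T, x' i = x i) → f x' = f x

/-- The set of indices tested by the non-adaptive strategy `π` in its first `k` tests. -/
def prefixSet (n : ℕ) (π : Equiv.Perm (Fin n)) (k : ℕ) : Finset (Fin n) :=
  Finset.univ.filter (fun i => (π.symm i).val < k)

/-- The number of tests performed by the non-adaptive strategy `π` on input `x`:
the least `k` such that the first `k` tested indices determine `f` on `x`. -/
noncomputable def naSteps (n : ℕ) (f : (Fin n → Bool) → Bool)
    (π : Equiv.Perm (Fin n)) (x : Fin n → Bool) : ℕ :=
  sInf {k : ℕ | Determines n f (prefixSet n π k) x}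

/-- The cost incurred by the non-adaptive strategy `π` on input `x`, with cost vector `c`. -/
noncomputable def naCost (n : ℕ) (f : (Fin n → Bool) → Bool) (c : Fin n → ℝ)
    (π : Equiv.Perm (Fin n)) (x : Fin n → Bool) : ℝ :=
  ∑ i ∈ prefixSet n π (naSteps n f π x), c i

/-- Probability of the outcome `x` under the product distribution with parameters `p`. -/
def prodWeight (n : ℕ) (p : Fin n → ℝ) (x : Fin n → Bool) : ℝ :=
  ∏ i : Fin n, if x i then p i else 1 - p i

/-- Expected cost of the non-adaptive strategy `π`. -/
noncomputable def naExpCost (n : ℕ) (f : (Fin n → Bool) → Bool) (c : Fin n → ℝ)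
    (p : Fin n → ℝ) (π : Equiv.Perm (Fin n)) : ℝ :=
  ∑ x : Fin n → Bool, prodWeight n p x * naCost n f c π x

/-- Optimal expected cost among non-adaptive strategies. -/
noncomputable def OPTN (n : ℕ) (f : (Fin n → Bool) → Bool) (c : Fin n → ℝ)
    (p : Fin n → ℝ) : ℝ :=
  sInf { r : ℝ | ∃ π : Equiv.Perm (Fin n), r = naExpCost n f c p π }

/-- Binary decision trees over `n` variables (adaptive strategies). -/
inductive DecTree (n : ℕ) : Type
  | leaf : Bool → DecTree n
  | node : Fin n → DecTree n → DecTree n → DecTree n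

/-- Evaluation of a decision tree on an input. -/
def DecTree.eval {n : ℕ} : DecTree n → (Fin n → Bool) → Bool
  | .leaf b, _ => b
  | .node i t0 t1, x => if x i then DecTree.eval t1 x else DecTree.eval t0 x

/-- Cost of a decision tree on input `x`: the sum of the costs of the indices
labeling the internal nodes on the root-to-leaf path followed on `x`. -/
def DecTree.costOn {n : ℕ} (c : Fin n → ℝ) : DecTree n → (Fin n → Bool) → ℝ
  | .leaf _, _ => 0
  | .node i t0 t1, x =>
      c i + (if x i then DecTree.costOn c t1 x else DecTree.costOn c t0 x)

/-- The decision tree `t` computes the function `f`. -/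
def DecTree.Computes {n : ℕ} (t : DecTree n) (f : (Fin n → Bool) → Bool) : Prop :=
  ∀ x, t.eval x = f x

/-- Expected cost of an adaptive strategy (decision tree). -/
noncomputable def adExpCost (n : ℕ) (c : Fin n → ℝ) (p : Fin n → ℝ)
    (t : DecTree n) : ℝ :=
  ∑ x : Fin n → Bool, prodWeight n p x * DecTree.costOn c t x

/-- Optimal expected cost among adaptive strategies computing `f`. -/
noncomputable def OPTA (n : ℕ) (f : (Fin n → Bool) → Bool) (c : Fin n → ℝ)
    (p : Fin n → ℝ) : ℝ :=
  sInf { r : ℝ | ∃ t : DecTree n, DecTree.Computes t f ∧ r = adExpCost n c p t }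

/-- `f` is the monotone read-once DNF whose terms are the (nonempty, pairwise disjoint)
sets of variables `T 0, …, T (m-1)`. -/
def IsReadOnceDNF (n m : ℕ) (T : Fin m → Finset (Fin n))
    (f : (Fin n → Bool) → Bool) : Prop :=
  (∀ j, (T j).Nonempty) ∧
  (∀ j k, j ≠ k → Disjoint (T j) (T k)) ∧
  (∀ x, f x = true ↔ ∃ j, ∀ i ∈ T j, x i = true)

/- ============ auxiliary development ============ -/
namespace SBFE
open Classical
variable {n m : ℕ}

/-- cube lemma -/
lemma sum_cube {N : ℕ} (F : Fin N → Bool → ℝ) :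
    ∑ x : Fin N → Bool, ∏ i, F i (x i) = ∏ i, (F i false + F i true) := by
  have := Finset.prod_univ_sum (fun _ : Fin N => (Finset.univ : Finset Bool)) (fun i b => F i b)
  rw [Fintype.piFinset_univ] at this
  rw [← this]
  exact Finset.prod_congr rfl fun i _ => by rw [Fintype.sum_bool]; ring

lemma sum_prodWeight (p : Fin n → ℝ) : ∑ x : Fin n → Bool, prodWeight n p x = 1 := by
  have := sum_cube (fun i b => if b then p i else 1 - p i)
  simp only [prodWeight]
  rw [this]
  simp

lemma prodWeight_nonneg {p : Fin n → ℝ} (hp : ∀ i, 0 ≤ p i ∧ p i ≤ 1) (x : Fin n → Bool) :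
    0 ≤ prodWeight n p x := by
  refine Finset.prod_nonneg fun i _ => ?_
  rcases hp i with ⟨h0, h1⟩
  split <;> linarith

lemma prodWeight_split (p : Fin n → ℝ) (i : Fin n) (x : Fin n → Bool) :
    prodWeight n p x = p i * prodWeight n (Function.update p i 1) x
      + (1 - p i) * prodWeight n (Function.update p i 0) x := by
  unfold prodWeight
  have h : ∀ (b : ℝ), (∏ i' : Fin n, if x i' then Function.update p i b i' else 1 - Function.update p i b i')
      = (if x i then b else 1 - b) * ∏ i' ∈ Finset.univ.erase i, (if x i' then p i' else 1 - p i') := by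
    intro b
    rw [← Finset.mul_prod_erase Finset.univ _ (Finset.mem_univ i)]
    rw [Function.update_self]
    congr 1
    refine Finset.prod_congr rfl fun i' hi' => ?_
    rw [Function.update_of_ne (Finset.ne_of_mem_erase hi')]
  rw [h 1, h 0]
  rw [← Finset.mul_prod_erase Finset.univ _ (Finset.mem_univ i)]
  by_cases hx : x i <;> simp [hx] <;> ring

lemma prodWeight_update_one_eq_zero (p : Fin n → ℝ) (i : Fin n) {x : Fin n → Bool}
    (hx : x i = false) : prodWeight n (Function.update p i 1) x = 0 := by
  refine Finset.prod_eq_zero (Finset.mem_univ i) ?_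
  simp [hx]

lemma prodWeight_update_zero_eq_zero (p : Fin n → ℝ) (i : Fin n) {x : Fin n → Bool}
    (hx : x i = true) : prodWeight n (Function.update p i 0) x = 0 := by
  refine Finset.prod_eq_zero (Finset.mem_univ i) ?_
  simp [hx]



def qv (T : Fin m → Finset (Fin n)) (p : Fin n → ℝ) (j : Fin m) : ℝ := ∏ i ∈ T j, p i

def Wv (T : Fin m → Finset (Fin n)) (p : Fin n → ℝ) (D : Finset (Fin m)) : ℝ :=
  ∏ j ∈ D, (1 - qv T p j)

variable {T : Fin m → Finset (Fin n)}

lemma qv_nonneg {p : Fin n → ℝ} (hp : ∀ i, 0 ≤ p i ∧ p i ≤ 1) (j : Fin m) :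
    0 ≤ qv T p j := Finset.prod_nonneg fun i _ => (hp i).1

lemma qv_le_one {p : Fin n → ℝ} (hp : ∀ i, 0 ≤ p i ∧ p i ≤ 1) (j : Fin m) :
    qv T p j ≤ 1 := Finset.prod_le_one (fun i _ => (hp i).1) (fun i _ => (hp i).2)

lemma Wv_nonneg {p : Fin n → ℝ} (hp : ∀ i, 0 ≤ p i ∧ p i ≤ 1) (D : Finset (Fin m)) :
    0 ≤ Wv T p D := Finset.prod_nonneg fun j _ => by linarith [qv_le_one (T := T) hp j]

lemma Wv_le_one {p : Fin n → ℝ} (hp : ∀ i, 0 ≤ p i ∧ p i ≤ 1) (D : Finset (Fin m)) :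
    Wv T p D ≤ 1 :=
  Finset.prod_le_one (fun j _ => by linarith [qv_le_one (T := T) hp j])
    (fun j _ => by linarith [qv_nonneg (T := T) hp j])

lemma qv_update_of_not_mem (p : Fin n → ℝ) {i : Fin n} {j : Fin m} (h : i ∉ T j) (b : ℝ) :
    qv T (Function.update p i b) j = qv T p j :=
  Finset.prod_congr rfl fun i' hi' => Function.update_of_ne (by rintro rfl; exact h hi') _ _

lemma qv_update_of_mem (p : Fin n → ℝ) {i : Fin n} {j : Fin m} (h : i ∈ T j) (b : ℝ) :
    qv T (Function.update p i b) j = b * ∏ i' ∈ (T j).erase i, p i' := by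
  unfold qv
  rw [← Finset.mul_prod_erase _ _ h, Function.update_self]
  congr 1
  exact Finset.prod_congr rfl fun i' hi' => Function.update_of_ne (Finset.ne_of_mem_erase hi') _ _

/-- minimum of ∏ w over subsets of `U` of size `a` -/
noncomputable def Bmin (w : Fin m → ℝ) (U : Finset (Fin m)) (a : ℕ) : ℝ :=
  if h : a ≤ U.card then
    ((U.powersetCard a).image fun A => ∏ j ∈ A, w j).min'
      (by rw [Finset.image_nonempty]; exact Finset.powersetCard_nonempty.2 h)
  else 0

noncomputable def Phi (w : Fin m → ℝ) (U : Finset (Fin m)) : ℝ :=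
  ∑ a ∈ Finset.range U.card, Bmin w U a

variable {w : Fin m → ℝ}

lemma Bmin_nonneg (hw : ∀ j, 0 ≤ w j) (U : Finset (Fin m)) (a : ℕ) : 0 ≤ Bmin w U a := by
  by_cases h : a ≤ U.card
  · rw [Bmin, dif_pos h]
    obtain ⟨A, hA, hval⟩ := Finset.mem_image.1
      (Finset.min'_mem ((U.powersetCard a).image fun A => ∏ j ∈ A, w j)
        (by rw [Finset.image_nonempty]; exact Finset.powersetCard_nonempty.2 h))
    rw [← hval]
    exact Finset.prod_nonneg fun j _ => hw j
  · rw [Bmin, dif_neg h]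

lemma Bmin_le {U : Finset (Fin m)} {a : ℕ} (h : a ≤ U.card) {S : Finset (Fin m)}
    (hS : S ⊆ U) (hcard : S.card = a) : Bmin w U a ≤ ∏ j ∈ S, w j := by
  unfold Bmin
  rw [dif_pos h]
  exact Finset.min'_le _ _ (Finset.mem_image.2 ⟨S, Finset.mem_powersetCard.2 ⟨hS, hcard⟩, rfl⟩)

lemma Bmin_zero (U : Finset (Fin m)) : Bmin w U 0 = 1 := by
  unfold Bmin
  rw [dif_pos (Nat.zero_le _)]
  apply le_antisymm
  · exact Finset.min'_le _ _ (Finset.mem_image.2 ⟨∅,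
      Finset.mem_powersetCard.2 ⟨Finset.empty_subset _, Finset.card_empty⟩, Finset.prod_empty⟩)
  · refine Finset.le_min' _ _ _ fun y hy => ?_
    obtain ⟨A, hA, hval⟩ := Finset.mem_image.1 hy
    rw [Finset.mem_powersetCard] at hA
    rw [Finset.card_eq_zero.1 hA.2] at hval
    rw [← hval, Finset.prod_empty]

lemma Bmin_succ_le {U : Finset (Fin m)} {j : Fin m} (hj : j ∈ U) {a : ℕ}
    (h : a + 1 ≤ U.card) : Bmin w U (a + 1) ≤ w j * Bmin w (U.erase j) a := by
  have hcarde : (U.erase j).card = U.card - 1 := Finset.card_erase_of_mem hj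
  have ha' : a ≤ (U.erase j).card := by omega
  -- get the minimizer for the erase side
  unfold Bmin
  rw [dif_pos ha', dif_pos h]
  obtain ⟨A, hA, hval⟩ := Finset.mem_image.1
    (Finset.min'_mem (((U.erase j).powersetCard a).image fun A => ∏ j ∈ A, w j)
      (by rw [Finset.image_nonempty]; exact Finset.powersetCard_nonempty.2 ha'))
  rw [Finset.mem_powersetCard] at hA
  have hjA : j ∉ A := fun hmem => (Finset.mem_erase.1 (hA.1 hmem)).1 rfl
  have hins : insert j A ∈ U.powersetCard (a + 1) := by
    refine Finset.mem_powersetCard.2 ⟨?_, ?_⟩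
    · intro x hx
      rcases Finset.mem_insert.1 hx with rfl | hx
      · exact hj
      · exact Finset.erase_subset _ _ (hA.1 hx)
    · rw [Finset.card_insert_of_notMem hjA, hA.2]
  calc _ ≤ ∏ j' ∈ insert j A, w j' :=
        Finset.min'_le _ _ (Finset.mem_image.2 ⟨_, hins, rfl⟩)
    _ = w j * ∏ j' ∈ A, w j' := Finset.prod_insert hjA
    _ = _ := by rw [hval]

lemma Phi_nonneg (hw : ∀ j, 0 ≤ w j) (U : Finset (Fin m)) : 0 ≤ Phi w U :=
  Finset.sum_nonneg fun a _ => Bmin_nonneg hw U a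

lemma Phi_step (hw : ∀ j, 0 ≤ w j) {U : Finset (Fin m)} {j : Fin m} (hj : j ∈ U) :
    Phi w U ≤ 1 + w j * Phi w (U.erase j) := by
  have hU : 0 < U.card := Finset.card_pos.2 ⟨j, hj⟩
  have hcarde : (U.erase j).card = U.card - 1 := Finset.card_erase_of_mem hj
  unfold Phi
  obtain ⟨u, hu⟩ : ∃ u, U.card = u + 1 := ⟨U.card - 1, by omega⟩
  rw [hu, Finset.sum_range_succ']
  rw [Bmin_zero, hcarde, hu]
  simp only [Nat.add_sub_cancel]
  rw [add_comm]
  gcongr 1 + ?_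
  rw [Finset.mul_sum]
  refine Finset.sum_le_sum fun a ha => ?_
  have hau := Finset.mem_range.1 ha
  exact Bmin_succ_le hj (by omega)



def satJ (T : Fin m → Finset (Fin n)) (j : Fin m) (x : Fin n → Bool) : ℝ :=
  ∏ i ∈ T j, (if x i then (1:ℝ) else 0)

lemma satJ_eq_one {j : Fin m} {x : Fin n → Bool} (h : ∀ i ∈ T j, x i = true) :
    satJ T j x = 1 :=
  Finset.prod_eq_one fun i hi => by rw [h i hi]; simp

lemma satJ_eq_zero {j : Fin m} {x : Fin n → Bool} (h : ¬ ∀ i ∈ T j, x i = true) :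
    satJ T j x = 0 := by
  push_neg at h
  obtain ⟨i, hi, hxi⟩ := h
  refine Finset.prod_eq_zero hi ?_
  simp [Bool.not_eq_true] at hxi
  simp [hxi]

lemma satJ_nonneg (j : Fin m) (x : Fin n → Bool) : 0 ≤ satJ T j x :=
  Finset.prod_nonneg fun i _ => by split <;> norm_num

lemma satJ_le_one (j : Fin m) (x : Fin n → Bool) : satJ T j x ≤ 1 :=
  Finset.prod_le_one (fun i _ => by split <;> norm_num) (fun i _ => by split <;> norm_num)

/-- core: expectation of a product of satJ over a set of pairwise disjoint terms -/
lemma expect_sat (hdisj : ∀ j k : Fin m, j ≠ k → Disjoint (T j) (T k))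
    (p : Fin n → ℝ) (t : Finset (Fin m)) :
    ∑ x : Fin n → Bool, prodWeight n p x * ∏ j ∈ t, satJ T j x = ∏ j ∈ t, qv T p j := by
  set V : Finset (Fin n) := t.biUnion T with hV
  have hd : ∀ j ∈ t, ∀ k ∈ t, j ≠ k → Disjoint (T j) (T k) := fun j _ k _ hjk => hdisj j k hjk
  have hstep : ∀ x : Fin n → Bool,
      prodWeight n p x * ∏ j ∈ t, satJ T j x
      = ∏ i, ((if x i then p i else 1 - p i) * (if i ∈ V then (if x i then (1:ℝ) else 0) else 1)) := by
    intro x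
    rw [Finset.prod_mul_distrib]
    congr 1
    rw [Finset.prod_ite_mem, Finset.univ_inter]
    rw [hV, Finset.prod_biUnion hd]
    rfl
  calc ∑ x : Fin n → Bool, prodWeight n p x * ∏ j ∈ t, satJ T j x
      = ∑ x : Fin n → Bool, ∏ i, ((if x i then p i else 1 - p i) * (if i ∈ V then (if x i then (1:ℝ) else 0) else 1)) :=
        Finset.sum_congr rfl fun x _ => hstep x
    _ = ∏ i, (if i ∈ V then p i else 1) := by
        rw [sum_cube (fun i b => (if b then p i else 1 - p i) * (if i ∈ V then (if b then (1:ℝ) else 0) else 1))]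
        refine Finset.prod_congr rfl fun i _ => ?_
        by_cases hi : i ∈ V <;> simp [hi] <;> ring
    _ = ∏ i ∈ V, p i := by rw [Finset.prod_ite_mem, Finset.univ_inter]
    _ = ∏ j ∈ t, qv T p j := Finset.prod_biUnion hd

lemma expect_unsat (hdisj : ∀ j k : Fin m, j ≠ k → Disjoint (T j) (T k))
    (p : Fin n → ℝ) (A : Finset (Fin m)) :
    ∑ x : Fin n → Bool, prodWeight n p x * ∏ j ∈ A, (1 - satJ T j x)
      = ∏ j ∈ A, (1 - qv T p j) := by
  have expand : ∀ (g : Fin m → ℝ), ∏ j ∈ A, (1 - g j)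
      = ∑ t ∈ A.powerset, (∏ j ∈ t, -g j) := by
    intro g
    have : ∀ j ∈ A, (1 - g j) = (-g j) + 1 := fun j _ => by ring
    rw [Finset.prod_congr rfl this, Finset.prod_add]
    exact Finset.sum_congr rfl fun t _ => by rw [Finset.prod_const_one, mul_one]
  have hneg : ∀ (g : Fin m → ℝ) (t : Finset (Fin m)),
      (∏ j ∈ t, -g j) = (-1:ℝ) ^ t.card * ∏ j ∈ t, g j := by
    intro g t
    rw [← Finset.prod_const (-1:ℝ), ← Finset.prod_mul_distrib]
    exact Finset.prod_congr rfl fun j _ => by ring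
  calc ∑ x : Fin n → Bool, prodWeight n p x * ∏ j ∈ A, (1 - satJ T j x)
      = ∑ t ∈ A.powerset, (-1:ℝ) ^ t.card * ∑ x : Fin n → Bool, prodWeight n p x * ∏ j ∈ t, satJ T j x := by
        have : ∀ x : Fin n → Bool, prodWeight n p x * ∏ j ∈ A, (1 - satJ T j x)
            = ∑ t ∈ A.powerset, (-1:ℝ) ^ t.card * (prodWeight n p x * ∏ j ∈ t, satJ T j x) := by
          intro x
          rw [expand (fun j => satJ T j x), Finset.mul_sum]
          refine Finset.sum_congr rfl fun t _ => ?_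
          rw [hneg (fun j => satJ T j x) t]
          ring
        rw [Finset.sum_congr rfl fun x _ => this x, Finset.sum_comm]
        exact Finset.sum_congr rfl fun t _ => by rw [← Finset.mul_sum]
    _ = ∏ j ∈ A, (1 - qv T p j) := by
        rw [expand (qv T p)]
        refine Finset.sum_congr rfl fun t _ => ?_
        rw [expect_sat hdisj p t, hneg (qv T p) t]

/- ===== touched terms and main adaptive lower bound ===== -/

def touched (tm : Fin n → Fin m) : DecTree n → (Fin n → Bool) → Finset (Fin m)
  | .leaf _, _ => ∅
  | .node i t0 t1, x => insert (tm i) (if x i then touched tm t1 x else touched tm t0 x)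

lemma card_touched_le_cost (tm : Fin n → Fin m) (t : DecTree n) (x : Fin n → Bool) :
    ((touched tm t x).card : ℝ) ≤ DecTree.costOn (fun _ => (1:ℝ)) t x := by
  induction t with
  | leaf b => simp [touched, DecTree.costOn]
  | node i t0 t1 ih0 ih1 =>
    simp only [touched, DecTree.costOn]
    by_cases hx : x i
    · simp only [hx, if_true]
      have h1 : ((insert (tm i) (touched tm t1 x)).card : ℝ) ≤ (touched tm t1 x).card + 1 := by
        exact_mod_cast Finset.card_insert_le _ _
      linarith
    · have hxf : x i = false := by simpa using hx
      simp only [hxf, Bool.false_eq_true, if_false]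
      have h1 : ((insert (tm i) (touched tm t0 x)).card : ℝ) ≤ (touched tm t0 x).card + 1 := by
        exact_mod_cast Finset.card_insert_le _ _
      linarith

def Consistent (p : Fin n → ℝ) (x : Fin n → Bool) : Prop :=
  (∀ i, p i = 1 → x i = true) ∧ (∀ i, p i = 0 → x i = false)

lemma prodWeight_eq_zero_true {p : Fin n → ℝ} {i : Fin n} (hp : p i = 0) {x : Fin n → Bool}
    (hx : x i = true) : prodWeight n p x = 0 :=
  Finset.prod_eq_zero (Finset.mem_univ i) (by simp [hx, hp])

lemma prodWeight_eq_zero_false {p : Fin n → ℝ} {i : Fin n} (hp : p i = 1) {x : Fin n → Bool}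
    (hx : x i = false) : prodWeight n p x = 0 :=
  Finset.prod_eq_zero (Finset.mem_univ i) (by simp [hx, hp])

variable {f : (Fin n → Bool) → Bool} {p₀ : Fin n → ℝ}

/-- The main adaptive lower bound, by induction over decision trees. -/
lemma main_lb (hTne : ∀ j, (T j).Nonempty)
    (hdisj : ∀ j k : Fin m, j ≠ k → Disjoint (T j) (T k))
    (hDNF : ∀ x, f x = true ↔ ∃ j, ∀ i ∈ T j, x i = true)
    (hp₀ : ∀ i, 0 < p₀ i ∧ p₀ i < 1)
    (tm : Fin n → Fin m) (htm : ∀ i, i ∈ T (tm i))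
    (t : DecTree n) (p : Fin n → ℝ) (D : Finset (Fin m))
    (hp : ∀ i, 0 ≤ p i ∧ p i ≤ 1)
    (hinv : ∀ j ∉ D, ∀ i ∈ T j, p i = p₀ i)
    (hcor : ∀ x, Consistent p x → DecTree.eval t x = f x) :
    (D.card : ℝ) + Wv T p D * Phi (fun j => 1 - qv T p₀ j) Dᶜ
      ≤ ∑ x : Fin n → Bool, prodWeight n p x * ((D ∪ touched tm t x).card : ℝ) := by
  set w : Fin m → ℝ := fun j => 1 - qv T p₀ j with hw
  have hwnn : ∀ j, 0 ≤ w j := fun j => by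
    have : 0 ≤ qv T p₀ j ∧ qv T p₀ j ≤ 1 := ⟨qv_nonneg (fun i => ⟨(hp₀ i).1.le, (hp₀ i).2.le⟩) j,
      qv_le_one (fun i => ⟨(hp₀ i).1.le, (hp₀ i).2.le⟩) j⟩
    simp only [hw]; linarith [this.2]
  induction t generalizing p D with
  | leaf b =>
    simp only [touched, Finset.union_empty]
    rw [← Finset.sum_mul, sum_prodWeight, one_mul]
    have hkey : Wv T p D * Phi w Dᶜ ≤ 0 := by
      by_cases hDc : Dᶜ = (∅ : Finset (Fin m))
      · rw [hDc]
        have : Phi w (∅ : Finset (Fin m)) = 0 := by simp [Phi]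
        rw [this, mul_zero]
      · obtain ⟨j, hj⟩ := Finset.nonempty_iff_ne_empty.2 hDc
        have hjD : j ∉ D := Finset.mem_compl.1 hj
        -- first: b = true
        set x1 : Fin n → Bool := fun i => if p i = 0 then false else true with hx1
        have hcons1 : Consistent p x1 := by
          constructor
          · intro i h1; simp only [hx1]; rw [if_neg (by rw [h1]; norm_num)]
          · intro i h0; simp only [hx1]; rw [if_pos h0]
        have hfx1 : f x1 = true := by
          refine (hDNF x1).2 ⟨j, fun i hi => ?_⟩
          have := hinv j hjD i hi
          simp only [hx1]
          rw [if_neg (by rw [this]; exact ne_of_gt (hp₀ i).1)]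
        have hb : b = true := by
          have := hcor x1 hcons1
          simpa [DecTree.eval, hfx1] using this
        -- second: some term of D is fully forced
        set x0 : Fin n → Bool := fun i => if p i = 1 then true else false with hx0
        have hcons0 : Consistent p x0 := by
          constructor
          · intro i h1; simp only [hx0]; rw [if_pos h1]
          · intro i h0; simp only [hx0]; rw [if_neg (by rw [h0]; norm_num)]
        have hfx0 : f x0 = true := by
          have h := hcor x0 hcons0
          rw [show DecTree.eval (DecTree.leaf b) x0 = b from rfl, hb] at h
          exact h.symm
        obtain ⟨j0, hj0⟩ := (hDNF x0).1 hfx0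
        have hall1 : ∀ i ∈ T j0, p i = 1 := by
          intro i hi
          have := hj0 i hi
          simp only [hx0] at this
          by_contra hne
          rw [if_neg hne] at this
          exact Bool.false_ne_true this
        have hj0D : j0 ∈ D := by
          by_contra hj0D
          obtain ⟨i, hi⟩ := hTne j0
          have := hinv j0 hj0D i hi
          have h1 := hall1 i hi
          rw [this] at h1
          exact absurd h1 (ne_of_lt (hp₀ i).2)
        have hq1 : qv T p j0 = 1 := Finset.prod_eq_one fun i hi => hall1 i hi
        have hW0 : Wv T p D = 0 := Finset.prod_eq_zero hj0D (by rw [hq1]; ring)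
        rw [hW0, zero_mul]
    linarith
  | node i t0 t1 ih0 ih1 =>
    set j := tm i with hj
    set D' := insert j D with hD'
    have hiTj : i ∈ T j := htm i
    -- rewrite RHS shape
    have hshape : ∀ x : Fin n → Bool,
        (D ∪ touched tm (DecTree.node i t0 t1) x) = D' ∪ (if x i then touched tm t1 x else touched tm t0 x) := by
      intro x
      simp only [touched, ← hj]
      rw [Finset.union_insert, hD', Finset.insert_union]
    rw [Finset.sum_congr rfl fun x _ => by rw [hshape x]]
    -- key step : bound by the D' quantity
    have hkey : (D'.card : ℝ) + Wv T p D' * Phi w D'ᶜ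
        ≤ ∑ x : Fin n → Bool, prodWeight n p x * ((D' ∪ (if x i then touched tm t1 x else touched tm t0 x)).card : ℝ) := by
      have hinv' : ∀ j' ∉ D', ∀ i' ∈ T j', p i' = p₀ i' :=
        fun j' hj' i' hi' => hinv j' (fun hmem => hj' (Finset.mem_insert_of_mem hmem)) i' hi'
      have hiTj' : ∀ j' : Fin m, j' ≠ j → i ∉ T j' := by
        intro j' hne hmem
        exact (Finset.disjoint_left.1 (hdisj j' j hne)) hmem hiTj
      by_cases hp0 : p i = 0
      · -- only the 0-branch matters, p unchanged
        have hup : Function.update p i 0 = p := by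
          rw [← hp0]; exact Function.update_eq_self i p
        have hsum : ∑ x : Fin n → Bool, prodWeight n p x * ((D' ∪ (if x i then touched tm t1 x else touched tm t0 x)).card : ℝ)
            = ∑ x : Fin n → Bool, prodWeight n p x * ((D' ∪ touched tm t0 x).card : ℝ) := by
          refine Finset.sum_congr rfl fun x _ => ?_
          by_cases hx : x i
          · rw [prodWeight_eq_zero_true hp0 hx, zero_mul, zero_mul]
          · rw [if_neg hx]
        rw [hsum]
        refine ih0 p D' hp hinv' ?_
        intro x hc
        have hxi : x i = false := hc.2 i hp0
        have := hcor x hc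
        simpa [DecTree.eval, hxi] using this
      · by_cases hp1 : p i = 1
        · have hsum : ∑ x : Fin n → Bool, prodWeight n p x * ((D' ∪ (if x i then touched tm t1 x else touched tm t0 x)).card : ℝ)
              = ∑ x : Fin n → Bool, prodWeight n p x * ((D' ∪ touched tm t1 x).card : ℝ) := by
            refine Finset.sum_congr rfl fun x _ => ?_
            by_cases hx : x i
            · rw [if_pos hx]
            · have hxf : x i = false := by simpa using hx
              rw [prodWeight_eq_zero_false hp1 hxf, zero_mul, zero_mul]
          rw [hsum]
          refine ih1 p D' hp hinv' ?_
          intro x hc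
          have hxi : x i = true := hc.1 i hp1
          have := hcor x hc
          simpa [DecTree.eval, hxi] using this
        · -- generic case
          set p1 := Function.update p i 1 with hp1def
          set p0 := Function.update p i 0 with hp0def
          have hpb : ∀ (b : ℝ), 0 ≤ b → b ≤ 1 → ∀ i', 0 ≤ Function.update p i b i' ∧ Function.update p i b i' ≤ 1 := by
            intro b hb0 hb1 i'
            by_cases hii : i' = i
            · subst hii; rw [Function.update_self]; exact ⟨hb0, hb1⟩
            · rw [Function.update_of_ne hii]; exact hp i'
          have hinvb : ∀ (b : ℝ), ∀ j' ∉ D', ∀ i' ∈ T j', Function.update p i b i' = p₀ i' := by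
            intro b j' hj' i' hi'
            have hjne : j' ≠ j := fun he => hj' (he ▸ Finset.mem_insert_self j D)
            have : i' ≠ i := fun he => hiTj' j' hjne (he ▸ hi')
            rw [Function.update_of_ne this]
            exact hinv' j' hj' i' hi'
          -- correctness for the two branches
          have hcor1 : ∀ x, Consistent p1 x → DecTree.eval t1 x = f x := by
            intro x hc
            have hxi : x i = true := hc.1 i (Function.update_self i 1 p)
            have hcp : Consistent p x := by
              constructor
              · intro i' h1
                by_cases hii : i' = i
                · subst hii; exact hxi
                · exact hc.1 i' (by rw [hp1def, Function.update_of_ne hii]; exact h1)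
              · intro i' h0
                have hii : i' ≠ i := fun he => hp0 (he ▸ h0)
                exact hc.2 i' (by rw [hp1def, Function.update_of_ne hii]; exact h0)
            have := hcor x hcp
            simpa [DecTree.eval, hxi] using this
          have hcor0 : ∀ x, Consistent p0 x → DecTree.eval t0 x = f x := by
            intro x hc
            have hxi : x i = false := hc.2 i (Function.update_self i 0 p)
            have hcp : Consistent p x := by
              constructor
              · intro i' h1
                have hii : i' ≠ i := fun he => hp1 (he ▸ h1)
                exact hc.1 i' (by rw [hp0def, Function.update_of_ne hii]; exact h1)
              · intro i' h0
                by_cases hii : i' = i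
                · subst hii; exact hxi
                · exact hc.2 i' (by rw [hp0def, Function.update_of_ne hii]; exact h0)
            have := hcor x hcp
            simpa [DecTree.eval, hxi] using this
          have hIH1 := ih1 p1 D' (hpb 1 zero_le_one le_rfl) (hinvb 1) hcor1
          have hIH0 := ih0 p0 D' (hpb 0 le_rfl zero_le_one) (hinvb 0) hcor0
          -- split the sum
          have hsplit : ∑ x : Fin n → Bool, prodWeight n p x * ((D' ∪ (if x i then touched tm t1 x else touched tm t0 x)).card : ℝ)
              = p i * (∑ x : Fin n → Bool, prodWeight n p1 x * ((D' ∪ touched tm t1 x).card : ℝ))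
              + (1 - p i) * (∑ x : Fin n → Bool, prodWeight n p0 x * ((D' ∪ touched tm t0 x).card : ℝ)) := by
            rw [Finset.mul_sum, Finset.mul_sum, ← Finset.sum_add_distrib]
            refine Finset.sum_congr rfl fun x _ => ?_
            rw [prodWeight_split p i x]
            simp only [hp1def, hp0def]
            by_cases hx : x i
            · rw [if_pos hx, prodWeight_update_zero_eq_zero p i hx]
              ring
            · have hxf : x i = false := by simpa using hx
              rw [if_neg hx, prodWeight_update_one_eq_zero p i hxf]
              ring
          rw [hsplit]
          have hpi0 : 0 ≤ p i := (hp i).1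
          have hpi1 : p i ≤ 1 := (hp i).2
          have hcomb : p i * ((D'.card : ℝ) + Wv T p1 D' * Phi w D'ᶜ)
              + (1 - p i) * ((D'.card : ℝ) + Wv T p0 D' * Phi w D'ᶜ)
              ≤ p i * (∑ x : Fin n → Bool, prodWeight n p1 x * ((D' ∪ touched tm t1 x).card : ℝ))
              + (1 - p i) * (∑ x : Fin n → Bool, prodWeight n p0 x * ((D' ∪ touched tm t0 x).card : ℝ)) := by
            have h1 := mul_le_mul_of_nonneg_left hIH1 hpi0
            have h0 := mul_le_mul_of_nonneg_left hIH0 (by linarith : (0:ℝ) ≤ 1 - p i)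
            linarith
          refine le_trans ?_ hcomb
          -- bracket identity
          have hjD' : j ∈ D' := Finset.mem_insert_self j D
          have hWb : ∀ (b : ℝ), Wv T (Function.update p i b) D'
              = (1 - b * ∏ i' ∈ (T j).erase i, p i') * ∏ j' ∈ D'.erase j, (1 - qv T p j') := by
            intro b
            rw [Wv, ← Finset.mul_prod_erase _ _ hjD', qv_update_of_mem p hiTj b]
            congr 1
            refine Finset.prod_congr rfl fun j' hj' => ?_
            rw [qv_update_of_not_mem p (hiTj' j' (Finset.ne_of_mem_erase hj')) b]
          have hWp : Wv T p D' = (1 - p i * ∏ i' ∈ (T j).erase i, p i') * ∏ j' ∈ D'.erase j, (1 - qv T p j') := by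
            rw [Wv, ← Finset.mul_prod_erase _ _ hjD']
            congr 2
            rw [qv, ← Finset.mul_prod_erase _ _ hiTj]
          have : p i * Wv T p1 D' + (1 - p i) * Wv T p0 D' = Wv T p D' := by
            rw [hp1def, hp0def, hWb 1, hWb 0, hWp]
            ring
          have hgoal : (D'.card : ℝ) + Wv T p D' * Phi w D'ᶜ
              = p i * ((D'.card : ℝ) + Wv T p1 D' * Phi w D'ᶜ)
              + (1 - p i) * ((D'.card : ℝ) + Wv T p0 D' * Phi w D'ᶜ) := by
            rw [← this]; ring
          rw [hgoal]
    -- final algebra: from D' bound to D bound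
    refine le_trans ?_ hkey
    by_cases hjD : j ∈ D
    · rw [hD', Finset.insert_eq_self.2 hjD]
    · have hcard : (D'.card : ℝ) = (D.card : ℝ) + 1 := by
        rw [hD', Finset.card_insert_of_notMem hjD]; push_cast; ring
      have hcompl : D'ᶜ = Dᶜ.erase j := by rw [hD', Finset.compl_insert]
      have hWD' : Wv T p D' = w j * Wv T p D := by
        rw [hD', Wv, Finset.prod_insert hjD]
        congr 1
        have : qv T p j = qv T p₀ j := Finset.prod_congr rfl fun i' hi' => hinv j hjD i' hi'
        rw [this]
      have hjDc : j ∈ Dᶜ := Finset.mem_compl.2 hjD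
      have hstep := Phi_step (w := w) hwnn hjDc
      have hWnn : 0 ≤ Wv T p D := Wv_nonneg hp D
      have hWle : Wv T p D ≤ 1 := Wv_le_one hp D
      have hPhin : 0 ≤ Phi w (Dᶜ.erase j) := Phi_nonneg hwnn _
      rw [hcard, hcompl, hWD']
      have h1 : Wv T p D * Phi w Dᶜ ≤ Wv T p D * (1 + w j * Phi w (Dᶜ.erase j)) :=
        mul_le_mul_of_nonneg_left hstep hWnn
      have h2 : Wv T p D * (1 + w j * Phi w (Dᶜ.erase j)) ≤ 1 + w j * Wv T p D * Phi w (Dᶜ.erase j) := by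
        have := mul_nonneg (mul_nonneg (hwnn j) hWnn) hPhin
        nlinarith [hwnn j]
      nlinarith

/- ===== existence of a tree computing f, and the adaptive-side bound ===== -/

def fullTree (f : (Fin n → Bool) → Bool) : List (Fin n) → (Fin n → Bool) → DecTree n
  | [], g => .leaf (f g)
  | i :: l, g => .node i (fullTree f l (Function.update g i false))
      (fullTree f l (Function.update g i true))

lemma fullTree_eval (f : (Fin n → Bool) → Bool) :
    ∀ (l : List (Fin n)) (g x : _), DecTree.eval (fullTree f l g) x
      = f (fun i => if i ∈ l then x i else g i) := by
  intro l
  induction l with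
  | nil => intro g x; simp only [fullTree, DecTree.eval, List.not_mem_nil, if_false]
  | cons i l ih =>
    intro g x
    have hfun : ∀ (b : Bool), x i = b →
        (fun i' => if i' ∈ l then x i' else Function.update g i b i')
        = (fun i' => if i' ∈ i :: l then x i' else g i') := by
      intro b hb
      funext i'
      by_cases hl : i' ∈ l
      · simp [hl, List.mem_cons]
      · by_cases hii : i' = i
        · subst hii; simp [hl, List.mem_cons, Function.update_self, hb.symm]
        · simp [hl, hii, List.mem_cons, Function.update_of_ne hii]
    by_cases hx : x i
    · simp only [fullTree, DecTree.eval, hx, if_true]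
      rw [ih, hfun true hx]
    · have hxf : x i = false := by simpa using hx
      simp only [fullTree, DecTree.eval, hxf, Bool.false_eq_true, if_false]
      rw [ih, hfun false hxf]

lemma exists_tree (f : (Fin n → Bool) → Bool) : ∃ t : DecTree n, DecTree.Computes t f := by
  refine ⟨fullTree f (List.finRange n) (fun _ => false), fun x => ?_⟩
  rw [fullTree_eval]
  congr 1
  funext i
  simp [List.mem_finRange]

lemma Phi_le_adExpCost (hTne : ∀ j, (T j).Nonempty)
    (hdisj : ∀ j k : Fin m, j ≠ k → Disjoint (T j) (T k))
    {f : (Fin n → Bool) → Bool}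
    (hDNF : ∀ x, f x = true ↔ ∃ j, ∀ i ∈ T j, x i = true)
    {p₀ : Fin n → ℝ} (hp₀ : ∀ i, 0 < p₀ i ∧ p₀ i < 1)
    (tm : Fin n → Fin m) (htm : ∀ i, i ∈ T (tm i))
    (t : DecTree n) (hcomp : DecTree.Computes t f) :
    Phi (fun j => 1 - qv T p₀ j) Finset.univ ≤ adExpCost n (fun _ => 1) p₀ t := by
  have hp : ∀ i, 0 ≤ p₀ i ∧ p₀ i ≤ 1 := fun i => ⟨(hp₀ i).1.le, (hp₀ i).2.le⟩
  have hmain := main_lb (T := T) hTne hdisj hDNF hp₀ tm htm t p₀ ∅ hp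
    (fun j _ i _ => rfl) (fun x _ => hcomp x)
  simp only [Finset.card_empty, Finset.empty_union, Nat.cast_zero, zero_add] at hmain
  have hW : Wv T p₀ (∅ : Finset (Fin m)) = 1 := Finset.prod_empty
  rw [hW, one_mul, Finset.compl_empty] at hmain
  refine hmain.trans ?_
  unfold adExpCost
  refine Finset.sum_le_sum fun x _ => ?_
  exact mul_le_mul_of_nonneg_left (card_touched_le_cost tm t x) (prodWeight_nonneg hp x)


/- ===== sorted prefixes minimize products ===== -/

lemma sorted_prefix_min {M : ℕ} (g : Fin M → ℝ) (hmono : Monotone g) (hg : ∀ b, 0 ≤ g b)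
    (S : Finset (Fin M)) :
    ∏ b ∈ Finset.univ.filter (fun b : Fin M => b.val < S.card), g b ≤ ∏ b ∈ S, g b := by
  set a := S.card with ha
  have haM : a ≤ M := le_trans (Finset.card_le_univ S) (by simp)
  set e := S.orderEmbOfFin ha.symm with he
  have hmem : ∀ b : Fin a, e b ∈ S := fun b => S.orderEmbOfFin_mem ha.symm b
  have hstrict : StrictMono e := e.strictMono
  have hle : ∀ b : Fin a, (b : ℕ) ≤ (e b : ℕ) := by
    intro b
    set F : ℕ → ℕ := fun v => if h : v < a then (e ⟨v, h⟩ : ℕ) else v + M with hF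
    have hFs : StrictMono F := by
      intro u v huv
      simp only [hF]
      by_cases hu : u < a <;> by_cases hv : v < a
      · rw [dif_pos hu, dif_pos hv]
        exact hstrict (show (⟨u, hu⟩ : Fin a) < ⟨v, hv⟩ from huv)
      · rw [dif_pos hu, dif_neg hv]
        have : ((e ⟨u, hu⟩ : Fin M) : ℕ) < M := (e ⟨u, hu⟩).isLt
        omega
      · omega
      · rw [dif_neg hu, dif_neg hv]; omega
    calc (b : ℕ) ≤ F (b : ℕ) := hFs.le_apply
      _ = (e b : ℕ) := by
          simp only [hF]
          rw [dif_pos b.isLt, Fin.eta]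
  -- rewrite both sides as products over Fin a
  have himg1 : Finset.image (fun b : Fin a => (e b : Fin M)) Finset.univ = S := by
    ext x
    simp only [Finset.mem_image, Finset.mem_univ, true_and]
    constructor
    · rintro ⟨b, rfl⟩; exact hmem b
    · intro hx
      have : x ∈ Set.range e := by rw [Finset.range_orderEmbOfFin]; exact hx
      obtain ⟨b, hb⟩ := this
      exact ⟨b, hb⟩
  have himg2 : Finset.image (fun b : Fin a => Fin.castLE haM b) Finset.univ
      = Finset.univ.filter (fun b : Fin M => b.val < a) := by
    ext x
    simp only [Finset.mem_image, Finset.mem_univ, true_and, Finset.mem_filter]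
    constructor
    · rintro ⟨b, rfl⟩; exact b.isLt
    · intro hx; exact ⟨⟨x.val, hx⟩, rfl⟩
  rw [← himg1, ← himg2,
    Finset.prod_image (fun x _ y _ hxy => e.injective hxy),
    Finset.prod_image (fun x _ y _ hxy => Fin.castLE_injective haM hxy)]
  refine Finset.prod_le_prod (fun b _ => hg _) fun b _ => ?_
  exact hmono (show Fin.castLE haM b ≤ e b from hle b)


end SBFE

/-- For a monotone read-once DNF `f` with `m` terms, each containing exactly `n/m`
variables (so every variable appears in exactly one term), under unit costs and
arbitrary probabilities there is a non-adaptive strategy of expected cost at most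
`(n/m)·OPT_A(f)`. -/
theorem stmt2 (n m : ℕ) (hm : 0 < m) (hdvd : m ∣ n)
    (T : Fin m → Finset (Fin n)) (f : (Fin n → Bool) → Bool)
    (hcard : ∀ j, (T j).card = n / m)
    (hcover : ∀ i : Fin n, ∃ j, i ∈ T j)
    (hf : IsReadOnceDNF n m T f)
    (p : Fin n → ℝ) (hp : ∀ i, 0 < p i ∧ p i < 1) :
    ∃ π : Equiv.Perm (Fin n),
      naExpCost n f (fun _ => 1) p π ≤ ((n : ℝ) / m) * OPTA n f (fun _ => 1) p := by
  classical
  obtain ⟨hTne, hdisj, hDNFiff⟩ := hf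
  have hp' : ∀ i, 0 ≤ p i ∧ p i ≤ 1 := fun i => ⟨(hp i).1.le, (hp i).2.le⟩
  set k := n / m with hk
  have hcard' : ∀ j, (T j).card = k := fun j => hcard j
  have hkpos : 0 < k := by
    obtain ⟨i, hi⟩ := hTne ⟨0, hm⟩
    have := hcard' ⟨0, hm⟩
    rw [← this]
    exact Finset.card_pos.2 ⟨i, hi⟩
  have hn : n = m * k := (Nat.mul_div_cancel' hdvd).symm
  set w : Fin m → ℝ := fun j => 1 - SBFE.qv T p j with hw
  have hwnn : ∀ j, 0 ≤ w j := fun j => by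
    simp only [hw]; linarith [SBFE.qv_le_one (T := T) hp' j]
  set σ := Tuple.sort w with hσ
  have hmono : Monotone (w ∘ σ) := Tuple.monotone_sort w
  choose tm htm using hcover
  -- the permutation testing blocks in the sorted order
  have hdivlt : ∀ i : Fin n, i.val / k < m := fun i =>
    (Nat.div_lt_iff_lt_mul hkpos).2 (by rw [← hn]; exact i.isLt)
  set gm : Fin n → Fin n := fun i =>
    ((T (σ ⟨i.val / k, hdivlt i⟩)).orderEmbOfFin (hcard' _) ⟨i.val % k, Nat.mod_lt _ hkpos⟩ : Fin n)
    with hgm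
  have hblock : ∀ i : Fin n, gm i ∈ T (σ ⟨i.val / k, hdivlt i⟩) := fun i =>
    Finset.orderEmbOfFin_mem _ _ _
  have hinj : Function.Injective gm := by
    intro i i' hee
    have hbb : (⟨i.val / k, hdivlt i⟩ : Fin m) = ⟨i'.val / k, hdivlt i'⟩ := by
      by_contra hne
      have hne' : σ ⟨i.val / k, hdivlt i⟩ ≠ σ ⟨i'.val / k, hdivlt i'⟩ :=
        fun he => hne (σ.injective he)
      exact (Finset.disjoint_left.1 (hdisj _ _ hne')) (hblock i) (hee ▸ hblock i')
    have hdivs : i.val / k = i'.val / k := congrArg Fin.val hbb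
    simp only [hgm] at hee
    rw [← hbb] at hee
    have hmods : i.val % k = i'.val % k := congrArg Fin.val
      (((T (σ ⟨i.val / k, hdivlt i⟩)).orderEmbOfFin (hcard' _)).injective hee)
    have h1 := Nat.div_add_mod i.val k
    have h2 := Nat.div_add_mod i'.val k
    exact Fin.ext (by rw [← h1, ← h2, hdivs, hmods])
  set π : Equiv.Perm (Fin n) := Equiv.ofBijective gm ((Finite.injective_iff_bijective).1 hinj)
    with hπdef
  have hπ : ∀ i, π i = gm i := fun i => rfl
  refine ⟨π, ?_⟩
  -- prefix sets are unions of sorted blocks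
  set A : ℕ → Finset (Fin m) := fun a => Finset.univ.filter (fun j => (σ.symm j).val < a)
    with hA
  have hprefix : ∀ a : ℕ, prefixSet n π (k * a) = (A a).biUnion T := by
    intro a
    ext y
    simp only [prefixSet, Finset.mem_filter, Finset.mem_univ, true_and, Finset.mem_biUnion,
      hA]
    have hyi : y = gm (π.symm y) := by rw [← hπ, Equiv.apply_symm_apply]
    constructor
    · intro hy
      have hdiv : (π.symm y).val / k < a :=
        (Nat.div_lt_iff_lt_mul hkpos).2 (by rw [mul_comm]; exact hy)
      refine ⟨σ ⟨(π.symm y).val / k, hdivlt _⟩, ?_, ?_⟩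
      · rw [Equiv.symm_apply_apply]; exact hdiv
      · have hmem := hblock (π.symm y)
        rw [← hyi] at hmem
        exact hmem
    · rintro ⟨j, hj, hyj⟩
      have hj2 : j = σ ⟨(π.symm y).val / k, hdivlt _⟩ := by
        by_contra hne
        have hmem := hblock (π.symm y)
        rw [← hyi] at hmem
        exact (Finset.disjoint_left.1 (hdisj _ _ hne)) hyj hmem
      rw [hj2, Equiv.symm_apply_apply] at hj
      have hlt : (π.symm y).val / k < a := hj
      have hthis := (Nat.div_lt_iff_lt_mul hkpos).1 hlt
      rwa [mul_comm a k] at hthis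
  have hcardprefix : ∀ K : ℕ, (prefixSet n π K).card ≤ K := by
    intro K
    refine le_trans (Finset.card_le_card_of_injOn (fun i => (π.symm i).val)
      (fun i hi => ?_) (fun i _ i' _ he => ?_)) (by rw [Finset.card_range])
    · simp only [Finset.mem_coe, prefixSet, Finset.mem_filter] at hi ⊢
      exact Finset.mem_range.2 hi.2
    · exact π.symm.injective (Fin.val_injective he)
  -- the indicator functions
  set Ia : ℕ → (Fin n → Bool) → ℝ := fun a x => ∏ j ∈ A a, (1 - SBFE.satJ T j x) with hIa
  have hIa_nonneg : ∀ a x, 0 ≤ Ia a x := fun a x =>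
    Finset.prod_nonneg fun j _ => by linarith [SBFE.satJ_le_one (T := T) j x]
  have hnaCost : ∀ x, naCost n f (fun _ => 1) π x
      = ((prefixSet n π (naSteps n f π x)).card : ℝ) := by
    intro x
    rw [naCost, Finset.sum_const, nsmul_eq_mul, mul_one]
  -- pointwise bound
  have hpoint : ∀ x, naCost n f (fun _ => 1) π x ≤ (k : ℝ) * ∑ a ∈ Finset.range m, Ia a x := by
    intro x
    by_cases htrue : f x = true
    · obtain ⟨j0, hj0⟩ := (hDNFiff x).1 htrue
      set s : Finset (Fin m) := Finset.univ.filter (fun b => ∀ i ∈ T (σ b), x i = true) with hs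
      have hne : s.Nonempty := by
        refine ⟨σ.symm j0, ?_⟩
        simp only [hs, Finset.mem_filter, Finset.mem_univ, true_and, Equiv.apply_symm_apply]
        exact hj0
      set r := s.min' hne with hr
      have hrs : ∀ i ∈ T (σ r), x i = true := by
        have := s.min'_mem hne
        simp only [hs, Finset.mem_filter] at this
        exact this.2
      have hdet : Determines n f (prefixSet n π (k * (r.val + 1))) x := by
        intro x' hagree
        have hsub : T (σ r) ⊆ prefixSet n π (k * (r.val + 1)) := by
          rw [hprefix (r.val + 1)]
          intro y hy
          refine Finset.mem_biUnion.2 ⟨σ r, ?_, hy⟩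
          simp only [hA, Finset.mem_filter, Finset.mem_univ, true_and,
            Equiv.symm_apply_apply]
          omega
        have hx' : f x' = true := (hDNFiff x').2
          ⟨σ r, fun i hi => by rw [hagree i (hsub hi)]; exact hrs i hi⟩
        rw [hx', htrue]
      have hsteps : naSteps n f π x ≤ k * (r.val + 1) := Nat.sInf_le hdet
      have hcost : naCost n f (fun _ => 1) π x ≤ (k : ℝ) * (r.val + 1) := by
        rw [hnaCost x]
        have hsub : prefixSet n π (naSteps n f π x) ⊆ prefixSet n π (k * (r.val + 1)) := by
          intro y hy
          simp only [prefixSet, Finset.mem_filter] at hy ⊢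
          exact ⟨hy.1, lt_of_lt_of_le hy.2 hsteps⟩
        have := le_trans (Finset.card_le_card hsub) (hcardprefix (k * (r.val + 1)))
        calc ((prefixSet n π (naSteps n f π x)).card : ℝ) ≤ (k * (r.val + 1) : ℕ) := by
              exact_mod_cast this
          _ = (k : ℝ) * (r.val + 1) := by push_cast; ring
      refine hcost.trans ?_
      have hsum : (r.val + 1 : ℝ) ≤ ∑ a ∈ Finset.range m, Ia a x := by
        have hone : ∀ a ∈ Finset.range (r.val + 1), Ia a x = 1 := by
          intro a ha
          have har : a ≤ r.val := by
            have := Finset.mem_range.1 ha; omega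
          refine Finset.prod_eq_one fun j hj => ?_
          simp only [hA, Finset.mem_filter, Finset.mem_univ, true_and] at hj
          have hbr : (σ.symm j) ∉ s := by
            intro hmem
            have := s.min'_le _ hmem
            rw [← hr] at this
            have : r.val ≤ (σ.symm j).val := this
            omega
          have : ¬ ∀ i ∈ T j, x i = true := by
            intro hall
            apply hbr
            simp only [hs, Finset.mem_filter, Finset.mem_univ, true_and,
              Equiv.apply_symm_apply]
            exact hall
          rw [SBFE.satJ_eq_zero this]; ring
        have hsubset : Finset.range (r.val + 1) ⊆ Finset.range m :=
          Finset.range_subset_range.2 (by have := r.isLt; omega)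
        calc (r.val + 1 : ℝ) = ∑ a ∈ Finset.range (r.val + 1), Ia a x := by
              rw [Finset.sum_congr rfl hone]; simp
          _ ≤ ∑ a ∈ Finset.range m, Ia a x :=
              Finset.sum_le_sum_of_subset_of_nonneg hsubset
                (fun a _ _ => hIa_nonneg a x)
      calc (k : ℝ) * (r.val + 1) ≤ (k : ℝ) * ∑ a ∈ Finset.range m, Ia a x := by
            have : (0:ℝ) ≤ (k:ℝ) := by positivity
            nlinarith
        _ = _ := rfl
    · -- f x = false : all terms unsatisfied
      have hunsat : ∀ j, ¬ ∀ i ∈ T j, x i = true := by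
        intro j hall
        exact htrue ((hDNFiff x).2 ⟨j, hall⟩)
      have hone : ∀ a ∈ Finset.range m, Ia a x = 1 := fun a _ =>
        Finset.prod_eq_one fun j _ => by rw [SBFE.satJ_eq_zero (hunsat j)]; ring
      have hcost : naCost n f (fun _ => 1) π x ≤ (n : ℝ) := by
        rw [hnaCost x]
        have := Finset.card_le_univ (prefixSet n π (naSteps n f π x))
        calc ((prefixSet n π (naSteps n f π x)).card : ℝ) ≤ (Finset.univ : Finset (Fin n)).card := by
              exact_mod_cast this
          _ = (n : ℝ) := by simp
      refine hcost.trans ?_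
      rw [Finset.sum_congr rfl hone, Finset.sum_const, Finset.card_range, nsmul_eq_mul, mul_one]
      refine le_of_eq ?_
      rw [hn]; push_cast; ring
  -- expectation bound
  have hexp : naExpCost n f (fun _ => 1) p π ≤ (k : ℝ) * SBFE.Phi w Finset.univ := by
    have hE : ∀ a, ∑ x : Fin n → Bool, prodWeight n p x * Ia a x = ∏ j ∈ A a, w j := by
      intro a
      exact SBFE.expect_unsat hdisj p (A a)
    have hstep1 : naExpCost n f (fun _ => 1) p π
        ≤ ∑ x : Fin n → Bool, prodWeight n p x * ((k : ℝ) * ∑ a ∈ Finset.range m, Ia a x) := by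
      refine Finset.sum_le_sum fun x _ => ?_
      exact mul_le_mul_of_nonneg_left (hpoint x) (SBFE.prodWeight_nonneg hp' x)
    refine hstep1.trans ?_
    have hswap : ∑ x : Fin n → Bool, prodWeight n p x * ((k : ℝ) * ∑ a ∈ Finset.range m, Ia a x)
        = (k : ℝ) * ∑ a ∈ Finset.range m, ∑ x : Fin n → Bool, prodWeight n p x * Ia a x := by
      calc ∑ x : Fin n → Bool, prodWeight n p x * ((k : ℝ) * ∑ a ∈ Finset.range m, Ia a x)
          = ∑ x : Fin n → Bool, ∑ a ∈ Finset.range m, (k : ℝ) * (prodWeight n p x * Ia a x) := by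
            refine Finset.sum_congr rfl fun x _ => ?_
            rw [Finset.mul_sum, Finset.mul_sum]
            exact Finset.sum_congr rfl fun a _ => by ring
        _ = ∑ a ∈ Finset.range m, ∑ x : Fin n → Bool, (k : ℝ) * (prodWeight n p x * Ia a x) :=
            Finset.sum_comm
        _ = (k : ℝ) * ∑ a ∈ Finset.range m, ∑ x : Fin n → Bool, prodWeight n p x * Ia a x := by
            rw [Finset.mul_sum]
            exact Finset.sum_congr rfl fun a _ => by rw [Finset.mul_sum]
    rw [hswap]
    have hknn : (0:ℝ) ≤ (k:ℝ) := by positivity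
    have hmin : ∀ a, a < m → ∏ j ∈ A a, w j ≤ SBFE.Bmin w Finset.univ a := by
      intro a ham
      have hm' : a ≤ (Finset.univ : Finset (Fin m)).card := by
        rw [Finset.card_univ, Fintype.card_fin]; omega
      rw [SBFE.Bmin, dif_pos hm']
      refine Finset.le_min' _ _ _ fun y hy => ?_
      obtain ⟨S, hS, rfl⟩ := Finset.mem_image.1 hy
      rw [Finset.mem_powersetCard] at hS
      have hAimg : A a = Finset.image σ (Finset.univ.filter fun b : Fin m => b.val < a) := by
        ext j
        simp only [hA, Finset.mem_filter, Finset.mem_univ, true_and, Finset.mem_image]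
        constructor
        · intro hj; exact ⟨σ.symm j, hj, Equiv.apply_symm_apply σ j⟩
        · rintro ⟨b, hb, rfl⟩; rw [Equiv.symm_apply_apply]; exact hb
      have hprodA : ∏ j ∈ A a, w j
          = ∏ b ∈ Finset.univ.filter (fun b : Fin m => b.val < a), (w ∘ σ) b := by
        rw [hAimg, Finset.prod_image (fun x _ y _ h => σ.injective h)]
        rfl
      have hprodS : ∏ j ∈ S, w j = ∏ b ∈ Finset.image σ.symm S, (w ∘ σ) b := by
        rw [Finset.prod_image (fun x _ y _ h => σ.symm.injective h)]
        refine (Finset.prod_congr rfl fun j _ => ?_).symm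
        simp only [Function.comp_apply, Equiv.apply_symm_apply]
      have hcardim : (Finset.image σ.symm S).card = a := by
        rw [Finset.card_image_of_injective _ σ.symm.injective, hS.2]
      rw [hprodA, hprodS]
      have := SBFE.sorted_prefix_min (w ∘ σ) hmono (fun b => hwnn _) (Finset.image σ.symm S)
      rwa [hcardim] at this
    have hPhieq : SBFE.Phi w Finset.univ
        = ∑ a ∈ Finset.range m, SBFE.Bmin w Finset.univ a := by
      rw [SBFE.Phi, Finset.card_univ, Fintype.card_fin]
    rw [hPhieq]
    refine mul_le_mul_of_nonneg_left ?_ hknn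
    refine Finset.sum_le_sum fun a ha => ?_
    rw [hE a]
    exact hmin a (Finset.mem_range.1 ha)
  -- adaptive lower bound
  have hOPT : SBFE.Phi w Finset.univ ≤ OPTA n f (fun _ => 1) p := by
    obtain ⟨t0, ht0⟩ := SBFE.exists_tree f
    refine le_csInf ⟨adExpCost n (fun _ => 1) p t0, ⟨t0, ht0, rfl⟩⟩ ?_
    rintro r ⟨t, hcomp, rfl⟩
    exact SBFE.Phi_le_adExpCost hTne hdisj hDNFiff hp tm htm t hcomp
  have hknm : ((n : ℝ) / m) = (k : ℝ) := by
    rw [hn]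
    push_cast
    rw [mul_comm]
    field_simp
  calc naExpCost n f (fun _ => 1) p π ≤ (k : ℝ) * SBFE.Phi w Finset.univ := hexp
    _ ≤ (k : ℝ) * OPTA n f (fun _ => 1) p :=
        mul_le_mul_of_nonneg_left hOPT (by positivity)
    _ = ((n : ℝ) / m) * OPTA n f (fun _ => 1) p := by rw [hknm]
end

section
/- There is a constant c > 0 such that for every integer k ≥ 3, letting n = 4k², there exist a monotone read-once DNF f on n variables (consisting of 4k pairwise-disjoint terms of k variables each) and a probability vector p ∈ (0,1)^n such that under unit costs OPT_N(f, unit costs, p) ≥ c · √n · OPT_A(f, unit costs, p). -/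
open Finset

namespace SBFE

/-- Sum over a cube of a product factorizes. -/
lemma sum_pi_prod {ι V : Type*} [Fintype ι] [DecidableEq ι] [Fintype V] (H : ι → V → ℝ) :
    ∑ y : ι → V, ∏ i, H i (y i) = ∏ i, ∑ v, H i v :=
  (Fintype.prod_sum H).symm

lemma sum_pi_bool {ι : Type*} [Fintype ι] [DecidableEq ι] (H : ι → Bool → ℝ) :
    ∑ y : ι → Bool, ∏ i, H i (y i) = ∏ i, (H i false + H i true) := by
  rw [sum_pi_prod]
  refine Finset.prod_congr rfl fun i _ => ?_
  simp [Fintype.univ_bool]; ring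

lemma cube_sum {κ : Type*} [Fintype κ] [DecidableEq κ] (B Ψ : κ → Bool → ℝ) :
    ∑ v : κ → Bool, (∏ b, B b (v b)) * (∏ b, Ψ b (v b))
      = ∏ b, (B b false * Ψ b false + B b true * Ψ b true) := by
  have h := sum_pi_bool (fun b t => B b t * Ψ b t)
  rw [← h]
  refine Finset.sum_congr rfl fun v _ => ?_
  rw [Finset.prod_mul_distrib]

variable (k : ℕ)

/-- The block equivalence: variable `(j, b)` is the `b`-th variable of term `j`. -/
def be : Fin (4*k) × Fin k ≃ Fin (4*k*k) := finProdFinEquiv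

/-- The probability vector: the first variable of each term has probability `1/(4k)`,
the others `1 - 1/(2k)`. -/
noncomputable def pvec : Fin (4*k*k) → ℝ := fun i =>
  if ((be k).symm i).2.val = 0 then 1/(4*k) else 1 - 1/(2*k)

/-- The terms. -/
def Tm (j : Fin (4*k)) : Finset (Fin (4*k*k)) :=
  Finset.univ.image (fun b : Fin k => be k (j, b))

/-- The read-once DNF. -/
def fdnf : (Fin (4*k*k) → Bool) → Bool := fun x =>
  decide (∃ j : Fin (4*k), ∀ b : Fin k, x (be k (j, b)) = true)

lemma pvec_apply (j : Fin (4*k)) (b : Fin k) :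
    pvec k (be k (j, b)) = if b.val = 0 then 1/(4*(k:ℝ)) else 1 - 1/(2*(k:ℝ)) := by
  simp [pvec]

/-- Repackaging of the input cube into blocks. -/
def Ye : (Fin (4*k) → Fin k → Bool) ≃ (Fin (4*k*k) → Bool) :=
  (Equiv.curry (Fin (4*k)) (Fin k) Bool).symm.trans
    ((be k).arrowCongr (Equiv.refl Bool))

lemma Ye_apply (y : Fin (4*k) → Fin k → Bool) (j : Fin (4*k)) (b : Fin k) :
    Ye k y (be k (j, b)) = y j b := by
  simp [Ye, Equiv.arrowCongr, Equiv.curry]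

/-- Main factorization lemma: the expectation of a product of block-local functions
is a product of block-local expectations. -/
lemma block_sum (p : Fin (4*k*k) → ℝ) (φ : Fin (4*k) → (Fin k → Bool) → ℝ) :
    ∑ x : Fin (4*k*k) → Bool,
        prodWeight (4*k*k) p x * ∏ j, φ j (fun b => x (be k (j, b)))
      = ∏ j, ∑ v : Fin k → Bool,
          (∏ b, if v b then p (be k (j, b)) else 1 - p (be k (j, b))) * φ j v := by
  rw [← Equiv.sum_comp (Ye k)
    (fun x => prodWeight (4*k*k) p x * ∏ j, φ j fun b => x (be k (j, b)))]
  have hw : ∀ y : Fin (4*k) → Fin k → Bool,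
      prodWeight (4*k*k) p (Ye k y)
        = ∏ j, ∏ b, if y j b then p (be k (j, b)) else 1 - p (be k (j, b)) := by
    intro y
    unfold prodWeight
    rw [← Equiv.prod_comp (be k) (fun i => if (Ye k y) i then p i else 1 - p i),
      Fintype.prod_prod_type]
    exact Finset.prod_congr rfl fun j _ => Finset.prod_congr rfl fun b _ => by
      rw [Ye_apply]
  have hstep : ∀ y : Fin (4*k) → Fin k → Bool,
      prodWeight (4*k*k) p (Ye k y) * ∏ j, φ j (fun b => Ye k y (be k (j, b)))
        = ∏ j, ((∏ b, if y j b then p (be k (j, b)) else 1 - p (be k (j, b))) * φ j (y j)) := by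
    intro y
    rw [hw y, ← Finset.prod_mul_distrib]
    refine Finset.prod_congr rfl fun j _ => ?_
    congr 1
    refine congrArg _ ?_
    funext b
    rw [Ye_apply]
  calc ∑ y : Fin (4*k) → Fin k → Bool,
        prodWeight (4*k*k) p (Ye k y) * ∏ j, φ j (fun b => Ye k y (be k (j, b)))
      = ∑ y : Fin (4*k) → Fin k → Bool,
          ∏ j, ((∏ b, if y j b then p (be k (j, b)) else 1 - p (be k (j, b))) * φ j (y j)) :=
        Finset.sum_congr rfl fun y _ => hstep y
    _ = _ := by
        set_option maxHeartbeats 1000000 in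
        exact sum_pi_prod (V := Fin k → Bool)
          (fun j v => (∏ b, if v b then p (be k (j, b)) else 1 - p (be k (j, b))) * φ j v)

/-- Fully explicit cube factorization. -/
lemma cube_sum2 {κ : Type*} [Fintype κ] [DecidableEq κ] (P Q R S : κ → ℝ) :
    ∑ v : κ → Bool, (∏ b, if v b then P b else Q b) * (∏ b, if v b then R b else S b)
      = ∏ b, (Q b * S b + P b * R b) := by
  have h1 : ∀ v : κ → Bool, (∏ b, if v b then P b else Q b) * (∏ b, if v b then R b else S b)
      = ∏ b, ((if v b then P b else Q b) * (if v b then R b else S b)) :=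
    fun v => (Finset.prod_mul_distrib).symm
  rw [Finset.sum_congr rfl fun v _ => h1 v]
  exact (sum_pi_bool (fun b t => (if t then P b else Q b) * (if t then R b else S b))).trans
    (Finset.prod_congr rfl fun b _ => by simp)

/-- Sum over the cube of the base weights alone. -/
lemma cube_mass {κ : Type*} [Fintype κ] [DecidableEq κ] (P : κ → ℝ) :
    ∑ v : κ → Bool, (∏ b, if v b then P b else 1 - P b) = 1 := by
  refine (sum_pi_bool (fun b t => if t then P b else 1 - P b)).trans ?_
  rw [Finset.prod_congr rfl (fun b _ => by simp :
    ∀ b ∈ univ, ((if false = true then P b else 1 - P b) + if true = true then P b else 1 - P b) = 1)]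
  simp

lemma ind_prod {κ : Type*} [Fintype κ] [DecidableEq κ] (v : κ → Bool)
    [inst : Decidable (∀ b, v b = true)] :
    (if (∀ b, v b = true) then (1:ℝ) else 0) = ∏ b, if v b then (1:ℝ) else 0 := by
  by_cases h : ∀ b, v b = true
  · rw [if_pos h]
    exact (Finset.prod_eq_one fun b _ => if_pos (h b)).symm
  · rw [if_neg h]
    push_neg at h
    obtain ⟨b, hb⟩ := h
    refine (Finset.prod_eq_zero (Finset.mem_univ b) ?_).symm
    exact if_neg hb

/-- Probability that a single term is all ones. -/
noncomputable def rho (k : ℕ) : ℝ := (1/(4*(k:ℝ))) * (1 - 1/(2*(k:ℝ)))^(k-1)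

section Blocks
variable {k : ℕ}

lemma block_mass (j : Fin (4*k)) :
    ∑ v : Fin k → Bool,
      (∏ b, if v b then pvec k (be k (j, b)) else 1 - pvec k (be k (j, b))) = 1 :=
  cube_mass _

variable [NeZero k]

lemma prod_pvec (j : Fin (4*k)) : ∏ b : Fin k, pvec k (be k (j, b)) = rho k := by
  rw [← Finset.mul_prod_erase Finset.univ _ (Finset.mem_univ (0 : Fin k))]
  rw [pvec_apply]
  have h2 : ∀ b ∈ Finset.univ.erase (0 : Fin k),
      pvec k (be k (j, b)) = 1 - 1/(2*(k:ℝ)) := by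
    intro b hb
    rw [pvec_apply]
    have hbne : b ≠ 0 := (Finset.mem_erase.1 hb).1
    rw [if_neg (fun h => hbne (Fin.ext (by rw [h]; simp)))]
  rw [Finset.prod_congr rfl h2, Finset.prod_const, Finset.card_erase_of_mem
    (Finset.mem_univ _), Finset.card_univ, Fintype.card_fin]
  simp [rho]

lemma block_ones (j : Fin (4*k)) :
    ∑ v : Fin k → Bool,
      (∏ b, if v b then pvec k (be k (j, b)) else 1 - pvec k (be k (j, b))) *
        (if (∀ b, v b = true) then (1:ℝ) else 0) = rho k := by
  have h1 : ∀ v : Fin k → Bool, (if (∀ b, v b = true) then (1:ℝ) else 0)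
      = ∏ b : Fin k, if v b then (1:ℝ) else (0:ℝ) := fun v => ind_prod v
  rw [Finset.sum_congr rfl fun v _ => by rw [h1 v]]
  rw [cube_sum2 (fun b => pvec k (be k (j, b))) (fun b => 1 - pvec k (be k (j, b)))
    (fun _ => (1:ℝ)) (fun _ => (0:ℝ))]
  rw [Finset.prod_congr rfl (fun b _ => by ring :
    ∀ b ∈ univ, ((1 - pvec k (be k (j, b))) * 0 + pvec k (be k (j, b)) * 1)
      = pvec k (be k (j, b)))]
  exact prod_pvec j

lemma block_zeros (j : Fin (4*k)) :
    ∑ v : Fin k → Bool,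
      (∏ b, if v b then pvec k (be k (j, b)) else 1 - pvec k (be k (j, b))) *
        (1 - (if (∀ b, v b = true) then (1:ℝ) else 0)) = 1 - rho k := by
  have h1 := block_mass (k := k) j
  have h2 := block_ones (k := k) j
  have : ∑ v : Fin k → Bool,
      (∏ b, if v b then pvec k (be k (j, b)) else 1 - pvec k (be k (j, b))) *
        (1 - (if (∀ b, v b = true) then (1:ℝ) else 0))
      = (∑ v : Fin k → Bool,
          (∏ b, if v b then pvec k (be k (j, b)) else 1 - pvec k (be k (j, b)))) -
        ∑ v : Fin k → Bool,
          (∏ b, if v b then pvec k (be k (j, b)) else 1 - pvec k (be k (j, b))) *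
            (if (∀ b, v b = true) then (1:ℝ) else 0) := by
    rw [← Finset.sum_sub_distrib]
    exact Finset.sum_congr rfl fun v _ => by ring
  rw [this, h1, h2]

lemma block_coord (j : Fin (4*k)) :
    ∑ v : Fin k → Bool,
      (∏ b, if v b then pvec k (be k (j, b)) else 1 - pvec k (be k (j, b))) *
        (if v 0 then (1:ℝ) else 0) = 1/(4*(k:ℝ)) := by
  have hpt : ∀ v : Fin k → Bool, (if v 0 then (1:ℝ) else 0) =
      ∏ b : Fin k, (if v b then (1:ℝ) else (if b = (0:Fin k) then 0 else 1)) := by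
    intro v
    by_cases h0 : v 0
    · rw [if_pos h0]
      refine (Finset.prod_eq_one fun b _ => ?_).symm
      by_cases hb : v b = true
      · rw [if_pos hb]
      · rw [if_neg hb, if_neg]
        intro he
        rw [he] at hb
        exact hb h0
    · rw [if_neg h0]
      refine (Finset.prod_eq_zero (Finset.mem_univ (0:Fin k)) ?_).symm
      simp [h0]
  rw [Finset.sum_congr rfl fun v _ => by rw [hpt v]]
  rw [cube_sum2 (fun b => pvec k (be k (j, b))) (fun b => 1 - pvec k (be k (j, b)))
    (fun _ => (1:ℝ)) (fun b => if b = (0:Fin k) then (0:ℝ) else 1)]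
  rw [← Finset.mul_prod_erase Finset.univ _ (Finset.mem_univ (0 : Fin k))]
  have h0 : ((1 - pvec k (be k (j, 0))) * (if (0:Fin k) = (0:Fin k) then (0:ℝ) else 1) +
      pvec k (be k (j, 0)) * 1) = 1/(4*(k:ℝ)) := by
    rw [if_pos rfl, pvec_apply]
    simp
  rw [h0]
  have h2 : ∀ b ∈ Finset.univ.erase (0 : Fin k),
      ((1 - pvec k (be k (j, b))) * (if b = (0:Fin k) then (0:ℝ) else 1) +
        pvec k (be k (j, b)) * 1) = 1 := by
    intro b hb
    rw [if_neg (Finset.mem_erase.1 hb).1]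
    ring
  rw [Finset.prod_congr rfl h2]
  simp

end Blocks

section Global
variable {k : ℕ} [NeZero k]

omit [NeZero k] in
lemma global_mass :
    ∑ x : Fin (4*k*k) → Bool, prodWeight (4*k*k) (pvec k) x = 1 := by
  have h := block_sum k (pvec k) (fun _ _ => (1:ℝ))
  simp only [mul_one, Finset.prod_const_one] at h
  rw [h, Finset.prod_congr rfl fun j _ => block_mass j]
  simp

lemma global_coord (j0 : Fin (4*k)) :
    ∑ x : Fin (4*k*k) → Bool, prodWeight (4*k*k) (pvec k) x *
      (if x (be k (j0, 0)) then (1:ℝ) else 0) = 1/(4*(k:ℝ)) := by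
  have hpt : ∀ x : Fin (4*k*k) → Bool,
      (if x (be k (j0, 0)) then (1:ℝ) else 0)
        = (∏ j, if j = j0 then (if x (be k (j, 0)) then (1:ℝ) else 0) else 1) := by
    intro x
    rw [Finset.prod_eq_single j0 (fun j _ hj => if_neg hj) (by simp), if_pos rfl]
  calc ∑ x : Fin (4*k*k) → Bool, prodWeight (4*k*k) (pvec k) x *
        (if x (be k (j0, 0)) then (1:ℝ) else 0)
      = ∑ x : Fin (4*k*k) → Bool, prodWeight (4*k*k) (pvec k) x *
          (∏ j, if j = j0 then (if x (be k (j, 0)) then (1:ℝ) else 0) else 1) :=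
        Finset.sum_congr rfl fun x _ => by rw [← hpt x]
    _ = ∏ j, ∑ v : Fin k → Bool,
          (∏ b, if v b then pvec k (be k (j, b)) else 1 - pvec k (be k (j, b))) *
            (if j = j0 then (if v 0 then (1:ℝ) else 0) else 1) :=
        block_sum k (pvec k) (fun j v => if j = j0 then (if v 0 then (1:ℝ) else 0) else 1)
    _ = 1/(4*(k:ℝ)) := by
        rw [Finset.prod_eq_single j0 (fun j _ hj => ?_) (by simp)]
        · rw [Finset.sum_congr rfl fun v _ => by rw [if_pos rfl]]
          exact block_coord j0
        · rw [Finset.sum_congr rfl fun v _ => by rw [if_neg hj, mul_one]]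
          exact block_mass j

/-- The key event probability: all terms in `G` fail, some term outside `G` is all ones. -/
lemma global_event (G : Finset (Fin (4*k))) :
    ∑ x : Fin (4*k*k) → Bool, prodWeight (4*k*k) (pvec k) x *
        ((∏ j ∈ G, (1 - (if (∀ b, x (be k (j, b)) = true) then (1:ℝ) else 0))) -
         (∏ j : Fin (4*k), (1 - (if (∀ b, x (be k (j, b)) = true) then (1:ℝ) else 0))))
      = (1 - rho k)^G.card - (1 - rho k)^(4*k) := by
  have hA2 : ∑ x : Fin (4*k*k) → Bool, prodWeight (4*k*k) (pvec k) x *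
      (∏ j ∈ G, (1 - (if (∀ b, x (be k (j, b)) = true) then (1:ℝ) else 0)))
      = (1 - rho k)^G.card := by
    calc ∑ x : Fin (4*k*k) → Bool, prodWeight (4*k*k) (pvec k) x *
          (∏ j ∈ G, (1 - (if (∀ b, x (be k (j, b)) = true) then (1:ℝ) else 0)))
        = ∑ x : Fin (4*k*k) → Bool, prodWeight (4*k*k) (pvec k) x *
            (∏ j, if j ∈ G then (1 - (if (∀ b, x (be k (j, b)) = true) then (1:ℝ) else 0))
              else 1) := by
          refine Finset.sum_congr rfl fun x _ => ?_
          rw [Finset.prod_ite_mem Finset.univ G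
            (fun j => 1 - (if (∀ b, x (be k (j, b)) = true) then (1:ℝ) else 0)),
            Finset.univ_inter]
      _ = ∏ j, ∑ v : Fin k → Bool,
            (∏ b, if v b then pvec k (be k (j, b)) else 1 - pvec k (be k (j, b))) *
              (if j ∈ G then (1 - (if (∀ b, v b = true) then (1:ℝ) else 0)) else 1) :=
          block_sum k (pvec k)
            (fun j v => if j ∈ G then (1 - (if (∀ b, v b = true) then (1:ℝ) else 0)) else 1)
      _ = ∏ j, (if j ∈ G then 1 - rho k else 1) := by
          refine Finset.prod_congr rfl fun j _ => ?_
          by_cases hj : j ∈ G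
          · rw [Finset.sum_congr rfl fun v _ => by rw [if_pos hj], if_pos hj]
            exact block_zeros j
          · rw [Finset.sum_congr rfl fun v _ => by rw [if_neg hj, mul_one], if_neg hj]
            exact block_mass j
      _ = (1 - rho k)^G.card := by
          rw [Finset.prod_ite_mem Finset.univ G (fun _ => 1 - rho k), Finset.univ_inter,
            Finset.prod_const]
  have hB2 : ∑ x : Fin (4*k*k) → Bool, prodWeight (4*k*k) (pvec k) x *
      (∏ j : Fin (4*k), (1 - (if (∀ b, x (be k (j, b)) = true) then (1:ℝ) else 0)))
      = (1 - rho k)^(4*k) := by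
    calc ∑ x : Fin (4*k*k) → Bool, prodWeight (4*k*k) (pvec k) x *
          (∏ j : Fin (4*k), (1 - (if (∀ b, x (be k (j, b)) = true) then (1:ℝ) else 0)))
        = ∏ j, ∑ v : Fin k → Bool,
            (∏ b, if v b then pvec k (be k (j, b)) else 1 - pvec k (be k (j, b))) *
              (1 - (if (∀ b, v b = true) then (1:ℝ) else 0)) :=
          block_sum k (pvec k) (fun _ v => 1 - (if (∀ b, v b = true) then (1:ℝ) else 0))
      _ = (1 - rho k)^(4*k) := by
          rw [Finset.prod_congr rfl fun j _ => block_zeros j, Finset.prod_const,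
            Finset.card_univ, Fintype.card_fin]
  calc ∑ x : Fin (4*k*k) → Bool, prodWeight (4*k*k) (pvec k) x *
        ((∏ j ∈ G, (1 - (if (∀ b, x (be k (j, b)) = true) then (1:ℝ) else 0))) -
         (∏ j : Fin (4*k), (1 - (if (∀ b, x (be k (j, b)) = true) then (1:ℝ) else 0))))
      = (∑ x : Fin (4*k*k) → Bool, prodWeight (4*k*k) (pvec k) x *
          (∏ j ∈ G, (1 - (if (∀ b, x (be k (j, b)) = true) then (1:ℝ) else 0)))) -
        ∑ x : Fin (4*k*k) → Bool, prodWeight (4*k*k) (pvec k) x *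
          (∏ j : Fin (4*k), (1 - (if (∀ b, x (be k (j, b)) = true) then (1:ℝ) else 0))) := by
        rw [← Finset.sum_sub_distrib]
        exact Finset.sum_congr rfl fun x _ => by ring
    _ = _ := by rw [hA2, hB2]

end Global

section Event
variable {k : ℕ} [NeZero k]

/-- The event: every term in `G` has a zero, and some term outside `G` is all ones. -/
def EvSet (k : ℕ) (G : Finset (Fin (4*k))) : Finset (Fin (4*k*k) → Bool) :=
  Finset.univ.filter (fun x =>
    (∀ j ∈ G, ¬ (∀ b : Fin k, x (be k (j, b)) = true)) ∧
    ∃ j, j ∉ G ∧ (∀ b : Fin k, x (be k (j, b)) = true))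

lemma event_prob (G : Finset (Fin (4*k))) :
    ∑ x ∈ EvSet k G, prodWeight (4*k*k) (pvec k) x
      = (1 - rho k)^G.card - (1 - rho k)^(4*k) := by
  rw [EvSet, Finset.sum_filter]
  rw [← global_event G]
  refine Finset.sum_congr rfl fun x _ => ?_
  by_cases h1 : ∃ j ∈ G, (∀ b : Fin k, x (be k (j, b)) = true)
  · obtain ⟨j, hj, hA⟩ := h1
    have hz : ∀ (s : Finset (Fin (4*k))), j ∈ s →
        (∏ j' ∈ s, (1 - (if (∀ b, x (be k (j', b)) = true) then (1:ℝ) else 0))) = 0 := by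
      intro s hs
      refine Finset.prod_eq_zero hs ?_
      rw [if_pos hA]
      ring
    rw [hz G hj, hz Finset.univ (Finset.mem_univ j), if_neg]
    · ring
    · rintro ⟨hall, -⟩
      exact hall j hj hA
  · have h1' : ∀ j ∈ G, ¬(∀ b : Fin k, x (be k (j, b)) = true) :=
      fun j hj hA => h1 ⟨j, hj, hA⟩
    have hG1 : (∏ j ∈ G, (1 - (if (∀ b, x (be k (j, b)) = true) then (1:ℝ) else 0))) = 1 :=
      Finset.prod_eq_one fun j hj => by rw [if_neg (h1' j hj)]; ring
    have hsplit : (∏ j : Fin (4*k), (1 - (if (∀ b, x (be k (j, b)) = true) then (1:ℝ) else 0)))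
        = ∏ j ∈ Gᶜ, (1 - (if (∀ b, x (be k (j, b)) = true) then (1:ℝ) else 0)) := by
      rw [← Finset.prod_mul_prod_compl G
        (fun j => 1 - (if (∀ b, x (be k (j, b)) = true) then (1:ℝ) else 0)), hG1, one_mul]
    rw [hG1, hsplit]
    by_cases h2 : ∃ j, j ∉ G ∧ (∀ b : Fin k, x (be k (j, b)) = true)
    · obtain ⟨j, hj, hA⟩ := h2
      have : (∏ j' ∈ Gᶜ, (1 - (if (∀ b, x (be k (j', b)) = true) then (1:ℝ) else 0))) = 0 := by
        refine Finset.prod_eq_zero (Finset.mem_compl.2 hj) ?_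
        rw [if_pos hA]; ring
      rw [this, if_pos ⟨h1', j, hj, hA⟩]
      ring
    · have h2' : ∀ j, j ∉ G → ¬(∀ b : Fin k, x (be k (j, b)) = true) :=
        fun j hj hA => h2 ⟨j, hj, hA⟩
      have : (∏ j' ∈ Gᶜ, (1 - (if (∀ b, x (be k (j', b)) = true) then (1:ℝ) else 0))) = 1 :=
        Finset.prod_eq_one fun j hj => by
          rw [if_neg (h2' j (Finset.mem_compl.1 hj))]; ring
      rw [this, if_neg]
      · ring
      · rintro ⟨-, j, hj, hA⟩
        exact h2' j hj hA

end Event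

section Numeric
variable {k : ℕ}

lemma rho_bounds (hk : 3 ≤ k) :
    1/(8*(k:ℝ)) ≤ rho k ∧ rho k ≤ 1/(4*(k:ℝ)) ∧ 0 < rho k ∧ rho k ≤ 1/12 := by
  have hK : (3:ℝ) ≤ (k:ℝ) := by exact_mod_cast hk
  have hK0 : (0:ℝ) < k := by linarith
  have h6 : (1:ℝ)/(2*(k:ℝ)) ≤ 1/6 := by
    rw [div_le_div_iff₀ (by linarith) (by norm_num)]
    linarith
  have h6' : (0:ℝ) < 1/(2*(k:ℝ)) := by positivity
  have hhalf : (1/2 : ℝ) ≤ (1 - 1/(2*(k:ℝ)))^(k-1) := by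
    have hb := one_add_mul_le_pow (a := -(1/(2*(k:ℝ)))) (by linarith : (-2:ℝ) ≤ -(1/(2*(k:ℝ)))) (k-1)
    have hcast : ((k-1 : ℕ) : ℝ) ≤ (k:ℝ) := by
      exact_mod_cast Nat.sub_le k 1
    have : (1:ℝ)/2 ≤ 1 + ((k-1 : ℕ):ℝ) * (-(1/(2*(k:ℝ)))) := by
      have h1 : ((k-1 : ℕ):ℝ) * (1/(2*(k:ℝ))) ≤ (k:ℝ) * (1/(2*(k:ℝ))) := by
        apply mul_le_mul_of_nonneg_right hcast
        positivity
      have h2 : (k:ℝ) * (1/(2*(k:ℝ))) = 1/2 := by field_simp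
      nlinarith
    calc (1/2 : ℝ) ≤ 1 + ((k-1 : ℕ):ℝ) * (-(1/(2*(k:ℝ)))) := this
      _ ≤ (1 + -(1/(2*(k:ℝ))))^(k-1) := hb
      _ = (1 - 1/(2*(k:ℝ)))^(k-1) := by ring_nf
  have hle1 : (1 - 1/(2*(k:ℝ)))^(k-1) ≤ 1 := by
    apply pow_le_one₀ <;> linarith
  have h4K : (0:ℝ) < 1/(4*(k:ℝ)) := by positivity
  refine ⟨?_, ?_, ?_, ?_⟩
  · calc 1/(8*(k:ℝ)) = (1/(4*(k:ℝ))) * (1/2) := by ring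
      _ ≤ (1/(4*(k:ℝ))) * (1 - 1/(2*(k:ℝ)))^(k-1) := by
          apply mul_le_mul_of_nonneg_left hhalf (le_of_lt h4K)
      _ = rho k := rfl
  · calc rho k = (1/(4*(k:ℝ))) * (1 - 1/(2*(k:ℝ)))^(k-1) := rfl
      _ ≤ (1/(4*(k:ℝ))) * 1 := mul_le_mul_of_nonneg_left hle1 (le_of_lt h4K)
      _ = 1/(4*(k:ℝ)) := by ring
  · have : (0:ℝ) < (1 - 1/(2*(k:ℝ)))^(k-1) := by linarith
    have := mul_pos h4K this
    exact this
  · have h1 : rho k ≤ 1/(4*(k:ℝ)) := by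
      calc rho k = (1/(4*(k:ℝ))) * (1 - 1/(2*(k:ℝ)))^(k-1) := rfl
        _ ≤ (1/(4*(k:ℝ))) * 1 := mul_le_mul_of_nonneg_left hle1 (le_of_lt h4K)
        _ = 1/(4*(k:ℝ)) := by ring
    have h2 : 1/(4*(k:ℝ)) ≤ 1/12 := by
      rw [div_le_div_iff₀ (by linarith) (by norm_num)]
      linarith
    linarith

lemma prob_lb (hk : 3 ≤ k) (g : ℕ) (hg : g ≤ 2*k) :
    (1/10 : ℝ) ≤ (1 - rho k)^g - (1 - rho k)^(4*k) := by
  obtain ⟨hr2, hr1, hr0, hr3⟩ := rho_bounds hk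
  have hK : (3:ℝ) ≤ (k:ℝ) := by exact_mod_cast hk
  have hK0 : (0:ℝ) < k := by linarith
  have hrle : rho k ≤ 1 := by linarith
  have hrpos : (0:ℝ) ≤ 1 - rho k := by linarith
  have h1 : (1/2 : ℝ) ≤ (1 - rho k)^g := by
    have hb := one_add_mul_le_pow (a := -(rho k)) (by linarith) g
    have hgr : (g:ℝ) * rho k ≤ 1/2 := by
      have hgK : (g:ℝ) ≤ 2*(k:ℝ) := by exact_mod_cast hg
      have : (g:ℝ) * rho k ≤ (2*(k:ℝ)) * (1/(4*(k:ℝ))) := by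
        apply mul_le_mul hgK hr1 (le_of_lt hr0) (by linarith)
      have h2 : (2*(k:ℝ)) * (1/(4*(k:ℝ))) = 1/2 := by field_simp; ring
      linarith
    calc (1/2 : ℝ) ≤ 1 + (g:ℝ) * (-(rho k)) := by nlinarith
      _ ≤ (1 + -(rho k))^g := hb
      _ = (1 - rho k)^g := by ring_nf
  have h2k : (1 - rho k)^(2*k) ≤ 4/5 := by
    have hb := one_add_mul_le_pow (a := rho k) (by linarith) (2*k)
    have hlb : (5/4 : ℝ) ≤ (1 + rho k)^(2*k) := by
      have h1' : (1/4 : ℝ) ≤ ((2*k : ℕ):ℝ) * rho k := by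
        have : ((2*k : ℕ):ℝ) = 2*(k:ℝ) := by push_cast; ring
        rw [this]
        have : (2*(k:ℝ)) * (1/(8*(k:ℝ))) ≤ 2*(k:ℝ) * rho k := by
          apply mul_le_mul_of_nonneg_left hr2 (by linarith)
        have h2 : (2*(k:ℝ)) * (1/(8*(k:ℝ))) = 1/4 := by field_simp; ring
        linarith
      calc (5/4 : ℝ) = 1 + 1/4 := by norm_num
        _ ≤ 1 + ((2*k : ℕ):ℝ) * rho k := by linarith
        _ ≤ (1 + rho k)^(2*k) := hb
    have hprod : (1 - rho k)^(2*k) * (1 + rho k)^(2*k) ≤ 1 := by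
      rw [← mul_pow]
      apply pow_le_one₀ <;> nlinarith
    nlinarith [pow_nonneg hrpos (2*k)]
  have h2 : (1 - rho k)^(4*k) ≤ (4/5) * (1 - rho k)^g := by
    have hsplit : (1 - rho k)^(4*k) = (1 - rho k)^g * (1 - rho k)^(4*k - g) := by
      rw [← pow_add]
      congr 1
      omega
    have hmono : (1 - rho k)^(4*k - g) ≤ (1 - rho k)^(2*k) :=
      pow_le_pow_of_le_one hrpos (by linarith) (by omega)
    calc (1 - rho k)^(4*k) = (1 - rho k)^g * (1 - rho k)^(4*k - g) := hsplit
      _ ≤ (1 - rho k)^g * (4/5) := by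
          apply mul_le_mul_of_nonneg_left (le_trans hmono h2k) (pow_nonneg hrpos g)
      _ = (4/5) * (1 - rho k)^g := by ring
  linarith

lemma pvec_mem (hk : 3 ≤ k) (i : Fin (4*k*k)) : 0 < pvec k i ∧ pvec k i < 1 := by
  have hK : (3:ℝ) ≤ (k:ℝ) := by exact_mod_cast hk
  have hK0 : (0:ℝ) < k := by linarith
  unfold pvec
  by_cases h : ((be k).symm i).2.val = 0
  · rw [if_pos h]
    constructor
    · positivity
    · rw [div_lt_one (by linarith)]
      linarith
  · rw [if_neg h]
    have : 1/(2*(k:ℝ)) ≤ 1/6 := by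
      rw [div_le_div_iff₀ (by linarith) (by norm_num)]
      linarith
    have hp : 0 < 1/(2*(k:ℝ)) := by positivity
    constructor <;> linarith

end Numeric

section NA
variable {k : ℕ}

lemma prefix_mono {n : ℕ} (π : Equiv.Perm (Fin n)) {s t : ℕ} (h : s ≤ t) :
    prefixSet n π s ⊆ prefixSet n π t := by
  intro i hi
  rw [prefixSet, Finset.mem_filter] at hi ⊢
  exact ⟨hi.1, lt_of_lt_of_le hi.2 h⟩

lemma filter_lt_eq (n L : ℕ) (h : L ≤ n) :
    (Finset.univ.filter fun a : Fin n => (a:ℕ) < L)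
      = (Finset.univ : Finset (Fin L)).map (Fin.castLEEmb h) := by
  ext a
  simp only [Finset.mem_filter, Finset.mem_univ, true_and, Finset.mem_map]
  constructor
  · intro ha
    exact ⟨⟨a.val, ha⟩, by ext; rfl⟩
  · rintro ⟨b, -, rfl⟩
    exact b.isLt

lemma card_prefixSet {n : ℕ} (π : Equiv.Perm (Fin n)) {L : ℕ} (h : L ≤ n) :
    (prefixSet n π L).card = L := by
  have himg : prefixSet n π L = (Finset.univ.filter fun a : Fin n => (a:ℕ) < L).image π := by
    ext i
    simp only [prefixSet, Finset.mem_filter, Finset.mem_univ, true_and, Finset.mem_image]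
    constructor
    · intro hi
      exact ⟨π.symm i, hi, π.apply_symm_apply i⟩
    · rintro ⟨a, ha, rfl⟩
      rwa [π.symm_apply_apply]
  rw [himg, Finset.card_image_of_injective _ π.injective, filter_lt_eq n L h,
    Finset.card_map, Finset.card_univ, Fintype.card_fin]

lemma naSteps_det {n : ℕ} (f : (Fin n → Bool) → Bool) (π : Equiv.Perm (Fin n))
    (x : Fin n → Bool) :
    Determines n f (prefixSet n π (naSteps n f π x)) x := by
  have hne : Determines n f (prefixSet n π n) x := by
    intro x' hx'
    have hxx : x' = x := funext fun i => hx' i (by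
      rw [prefixSet, Finset.mem_filter]
      exact ⟨Finset.mem_univ _, (π.symm i).isLt⟩)
    rw [hxx]
  have hmem : n ∈ {m : ℕ | Determines n f (prefixSet n π m) x} := hne
  exact Nat.sInf_mem ⟨n, hmem⟩

lemma cert (x : Fin (4*k*k) → Bool) (S : Finset (Fin (4*k*k)))
    (hf : fdnf k x = true) (hdet : Determines (4*k*k) (fdnf k) S x) :
    ∃ j, Tm k j ⊆ S ∧ ∀ b, x (be k (j, b)) = true := by
  set x' : Fin (4*k*k) → Bool := fun i => if i ∈ S then x i else false with hx'
  have hagree : ∀ i ∈ S, x' i = x i := fun i hi => by simp [hx', hi]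
  have hfx' : fdnf k x' = true := (hdet x' hagree).trans hf
  rw [fdnf, decide_eq_true_iff] at hfx'
  obtain ⟨j, hj⟩ := hfx'
  refine ⟨j, ?_, ?_⟩
  · intro i hi
    rw [Tm, Finset.mem_image] at hi
    obtain ⟨b, -, rfl⟩ := hi
    have hb := hj b
    by_contra hiS
    simp [hx', hiS] at hb
  · intro b
    have hb := hj b
    by_cases hiS : be k (j, b) ∈ S
    · simpa [hx', hiS] using hb
    · simp [hx', hiS] at hb

lemma Tm_card [NeZero k] (j : Fin (4*k)) : (Tm k j).card = k := by
  rw [Tm, Finset.card_image_of_injective _ (fun b1 b2 h => by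
    have h2 := (be k).injective h
    exact congrArg Prod.snd h2), Finset.card_univ, Fintype.card_fin]

lemma Tm_disj (j1 j2 : Fin (4*k)) (hne : j1 ≠ j2) : Disjoint (Tm k j1) (Tm k j2) := by
  rw [Finset.disjoint_left]
  intro i h1 h2
  rw [Tm, Finset.mem_image] at h1 h2
  obtain ⟨b1, -, rfl⟩ := h1
  obtain ⟨b2, -, he⟩ := h2
  have h2 := (be k).injective he
  exact hne (congrArg Prod.fst h2).symm

lemma naExp_lb (hk : 3 ≤ k) (π : Equiv.Perm (Fin (4*k*k))) :
    ((k:ℝ))^2/5 ≤ naExpCost (4*k*k) (fdnf k) (fun _ => 1) (pvec k) π := by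
  haveI : NeZero k := ⟨by omega⟩
  have hkk9 : 9 ≤ k*k := Nat.mul_le_mul hk hk
  have h2k4k : 2*k*k ≤ 4*k*k := by
    have : 2*k ≤ 4*k := by omega
    exact mul_le_mul_left this k
  have h2k14k : 2*k*k+1 ≤ 4*k*k := by
    have h1 : 2*k*k + 1 ≤ 2*k*k + k*k := by linarith
    have h2 : 2*k*k + k*k = 3*k*k := by ring
    have h3 : 3*k*k ≤ 4*k*k := mul_le_mul_left (by omega : 3*k ≤ 4*k) k
    omega
  set G : Finset (Fin (4*k)) :=
    Finset.univ.filter (fun j => Tm k j ⊆ prefixSet (4*k*k) π (2*k*k)) with hG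
  have hGcard : G.card ≤ 2*k := by
    have hsub : G.biUnion (Tm k) ⊆ prefixSet (4*k*k) π (2*k*k) := by
      intro i hi
      rw [Finset.mem_biUnion] at hi
      obtain ⟨j, hj, hij⟩ := hi
      exact (Finset.mem_filter.1 hj).2 hij
    have hbi : (G.biUnion (Tm k)).card = G.card * k := by
      rw [Finset.card_biUnion (fun j1 _ j2 _ hne => Tm_disj j1 j2 hne),
        Finset.sum_congr rfl fun j _ => Tm_card j, Finset.sum_const, smul_eq_mul]
    have hle := Finset.card_le_card hsub
    rw [hbi, card_prefixSet π h2k4k] at hle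
    have : G.card * k ≤ (2*k) * k := by
      calc G.card * k ≤ 2*k*k := hle
        _ = (2*k)*k := by ring
    exact Nat.le_of_mul_le_mul_right this (by omega)
  have hcost : ∀ x ∈ EvSet k G,
      (2*(k:ℝ)*(k:ℝ)) ≤ naCost (4*k*k) (fdnf k) (fun _ => 1) π x := by
    intro x hx
    rw [EvSet, Finset.mem_filter] at hx
    obtain ⟨-, hall, j, hjG, hA⟩ := hx
    have hfx : fdnf k x = true := by
      rw [fdnf, decide_eq_true_iff]
      exact ⟨j, hA⟩
    obtain ⟨j0, hj0S, hj0A⟩ := cert x _ hfx (naSteps_det (fdnf k) π x)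
    have hj0G : j0 ∉ G := by
      intro hmem
      exact hall j0 hmem hj0A
    have hsteps : 2*k*k < naSteps (4*k*k) (fdnf k) π x := by
      by_contra hle
      push_neg at hle
      have hsub2 : Tm k j0 ⊆ prefixSet (4*k*k) π (2*k*k) :=
        hj0S.trans (prefix_mono π hle)
      exact hj0G (Finset.mem_filter.2 ⟨Finset.mem_univ _, hsub2⟩)
    have h1 : naCost (4*k*k) (fdnf k) (fun _ => 1) π x
        = ((prefixSet (4*k*k) π (naSteps (4*k*k) (fdnf k) π x)).card : ℝ) := by
      rw [naCost]
      simp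
    have h2 : 2*k*k + 1 ≤ (prefixSet (4*k*k) π (naSteps (4*k*k) (fdnf k) π x)).card := by
      calc 2*k*k + 1 = (prefixSet (4*k*k) π (2*k*k+1)).card :=
            (card_prefixSet π h2k14k).symm
        _ ≤ _ := Finset.card_le_card (prefix_mono π (by omega))
    rw [h1]
    have h3 : ((2*k*k + 1 : ℕ) : ℝ) ≤ _ := Nat.cast_le.2 h2
    push_cast at h3
    push_cast
    linarith
  have hwnn : ∀ x : Fin (4*k*k) → Bool, 0 ≤ prodWeight (4*k*k) (pvec k) x := by
    intro x
    apply Finset.prod_nonneg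
    intro i _
    obtain ⟨hp0, hp1⟩ := pvec_mem hk i
    by_cases hxi : x i = true <;> simp [hxi] <;> linarith
  have hcostnn : ∀ x : Fin (4*k*k) → Bool,
      0 ≤ naCost (4*k*k) (fdnf k) (fun _ => 1) π x := by
    intro x
    rw [naCost]
    exact Finset.sum_nonneg fun i _ => by norm_num
  calc ((k:ℝ))^2/5 = (2*(k:ℝ)*(k:ℝ)) * (1/10) := by ring
    _ ≤ (2*(k:ℝ)*(k:ℝ)) * ((1 - rho k)^G.card - (1 - rho k)^(4*k)) := by
        apply mul_le_mul_of_nonneg_left (prob_lb hk G.card hGcard) (by positivity)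
    _ = (2*(k:ℝ)*(k:ℝ)) * ∑ x ∈ EvSet k G, prodWeight (4*k*k) (pvec k) x := by
        rw [event_prob]
    _ = ∑ x ∈ EvSet k G, prodWeight (4*k*k) (pvec k) x * (2*(k:ℝ)*(k:ℝ)) := by
        rw [Finset.mul_sum]
        exact Finset.sum_congr rfl fun x _ => by ring
    _ ≤ ∑ x ∈ EvSet k G, prodWeight (4*k*k) (pvec k) x *
          naCost (4*k*k) (fdnf k) (fun _ => 1) π x :=
        Finset.sum_le_sum fun x hx =>
          mul_le_mul_of_nonneg_left (hcost x hx) (hwnn x)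
    _ ≤ ∑ x : Fin (4*k*k) → Bool, prodWeight (4*k*k) (pvec k) x *
          naCost (4*k*k) (fdnf k) (fun _ => 1) π x :=
        Finset.sum_le_sum_of_subset_of_nonneg (Finset.subset_univ _)
          (fun x _ _ => mul_nonneg (hwnn x) (hcostnn x))
    _ = naExpCost (4*k*k) (fdnf k) (fun _ => 1) (pvec k) π := rfl

lemma OPTN_lb (hk : 3 ≤ k) :
    ((k:ℝ))^2/5 ≤ OPTN (4*k*k) (fdnf k) (fun _ => 1) (pvec k) := by
  rw [OPTN]
  refine le_csInf ⟨naExpCost (4*k*k) (fdnf k) (fun _ => 1) (pvec k) 1, 1, rfl⟩ ?_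
  rintro r ⟨π, rfl⟩
  exact naExp_lb hk π

end NA

section Tree
variable {k : ℕ}

/-- Tree that checks whether all indices in `l` are 1; if yes answers `true`,
on the first 0 it continues with `cont`. -/
def verifyT (n : ℕ) : List (Fin n) → DecTree n → DecTree n
  | [], _ => .leaf true
  | i :: r, cont => .node i cont (verifyT n r cont)

/-- The non-indicator variables of term `j`. -/
def heavies (k : ℕ) [NeZero k] (j : Fin (4*k)) : List (Fin (4*k*k)) :=
  ((List.finRange k).filter (fun b => b != 0)).map (fun b => be k (j, b))

/-- The adaptive strategy: go through the terms; test the indicator of each term;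
if it is 1, verify the rest of the term. -/
def buildT (k : ℕ) [NeZero k] : List (Fin (4*k)) → DecTree (4*k*k)
  | [] => .leaf false
  | j :: rest => .node (be k (j, 0)) (buildT k rest) (verifyT (4*k*k) (heavies k j) (buildT k rest))

lemma eval_verifyT {n : ℕ} (l : List (Fin n)) (cont : DecTree n) (x : Fin n → Bool) :
    (verifyT n l cont).eval x = if (∀ i ∈ l, x i = true) then true else cont.eval x := by
  induction l with
  | nil => simp [verifyT, DecTree.eval]
  | cons i r ih =>
    show (if x i then (verifyT n r cont).eval x else cont.eval x) = _
    by_cases hxi : x i = true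
    · rw [if_pos hxi, ih]
      by_cases hall : ∀ i' ∈ r, x i' = true
      · rw [if_pos hall, if_pos]
        intro i' hi'
        rcases List.mem_cons.1 hi' with h | h
        · rw [h]; exact hxi
        · exact hall i' h
      · rw [if_neg hall, if_neg]
        intro hc
        exact hall fun i' hi' => hc i' (List.mem_cons_of_mem _ hi')
    · rw [if_neg (by simpa using hxi), if_neg]
      intro hc
      exact hxi (hc i List.mem_cons_self)

variable [NeZero k]

lemma mem_heavies (j : Fin (4*k)) (i : Fin (4*k*k)) :
    i ∈ heavies k j ↔ ∃ b : Fin k, b ≠ 0 ∧ i = be k (j, b) := by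
  simp only [heavies, List.mem_map, List.mem_filter, List.mem_finRange, true_and,
    bne_iff_ne, ne_eq]
  constructor
  · rintro ⟨b, hb, rfl⟩
    exact ⟨b, hb, rfl⟩
  · rintro ⟨b, hb, rfl⟩
    exact ⟨b, hb, rfl⟩

lemma eval_buildT (l : List (Fin (4*k))) (x : Fin (4*k*k) → Bool) :
    (buildT k l).eval x = decide (∃ j ∈ l, ∀ b : Fin k, x (be k (j, b)) = true) := by
  induction l with
  | nil => simp [buildT, DecTree.eval]
  | cons j rest ih =>
    show (if x (be k (j, 0)) then (verifyT (4*k*k) (heavies k j) (buildT k rest)).eval x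
        else (buildT k rest).eval x) = _
    by_cases h0 : x (be k (j, 0)) = true
    · rw [if_pos (by simpa using h0), eval_verifyT]
      by_cases hall : ∀ i ∈ heavies k j, x i = true
      · rw [if_pos hall]
        have hA : ∀ b : Fin k, x (be k (j, b)) = true := by
          intro b
          by_cases hb : b = 0
          · rw [hb]; exact h0
          · exact hall _ ((mem_heavies j _).2 ⟨b, hb, rfl⟩)
        exact (decide_eq_true ⟨j, List.mem_cons_self, hA⟩).symm
      · rw [if_neg hall, ih]
        apply decide_eq_decide.2
        constructor
        · rintro ⟨j', hj', hA⟩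
          refine ⟨j', List.mem_cons_of_mem _ hj', hA⟩
        · rintro ⟨j', hj', hA⟩
          rcases List.mem_cons.1 hj' with h | h
          · exfalso
            apply hall
            intro i hi
            obtain ⟨b, -, rfl⟩ := (mem_heavies j i).1 hi
            rw [← h]
            exact hA b
          · exact ⟨j', h, hA⟩
    · rw [if_neg (by simpa using h0), ih]
      apply decide_eq_decide.2
      constructor
      · rintro ⟨j', hj', hA⟩
        refine ⟨j', List.mem_cons_of_mem _ hj', hA⟩
      · rintro ⟨j', hj', hA⟩
        rcases List.mem_cons.1 hj' with h | h
        · exact absurd (h ▸ hA 0) h0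
        · exact ⟨j', h, hA⟩

lemma buildT_computes : DecTree.Computes (buildT k (List.finRange (4*k))) (fdnf k) := by
  intro x
  rw [eval_buildT, fdnf]
  apply decide_eq_decide.2
  constructor
  · rintro ⟨j, -, hA⟩
    exact ⟨j, hA⟩
  · rintro ⟨j, hA⟩
    exact ⟨j, List.mem_finRange j, hA⟩

lemma costOn_nonneg {n : ℕ} (t : DecTree n) (x : Fin n → Bool) :
    0 ≤ DecTree.costOn (fun _ => (1:ℝ)) t x := by
  induction t with
  | leaf b => exact le_refl 0 |>.trans (by rw [DecTree.costOn])
  | node i t0 t1 ih0 ih1 =>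
    show (0:ℝ) ≤ 1 + (if x i then DecTree.costOn (fun _ => 1) t1 x
      else DecTree.costOn (fun _ => 1) t0 x)
    by_cases hxi : x i = true
    · rw [if_pos (by simpa using hxi)]; linarith
    · rw [if_neg (by simpa using hxi)]; linarith

lemma cost_verifyT {n : ℕ} (l : List (Fin n)) (cont : DecTree n) (x : Fin n → Bool) :
    (verifyT n l cont).costOn (fun _ => (1:ℝ)) x
      ≤ l.length + cont.costOn (fun _ => (1:ℝ)) x := by
  induction l with
  | nil =>
    show (0:ℝ) ≤ _
    have := costOn_nonneg cont x
    simp only [List.length_nil, Nat.cast_zero, zero_add]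
    exact this
  | cons i r ih =>
    show (1:ℝ) + (if x i then (verifyT n r cont).costOn (fun _ => (1:ℝ)) x
        else cont.costOn (fun _ => (1:ℝ)) x) ≤ _
    rw [List.length_cons]
    push_cast
    by_cases hxi : x i = true
    · rw [if_pos (by simpa using hxi)]
      linarith
    · rw [if_neg (by simpa using hxi)]
      have : (0:ℝ) ≤ r.length := by positivity
      linarith

lemma heavies_length (j : Fin (4*k)) : ((heavies k j).length : ℝ) ≤ (k:ℝ) := by
  have h1 : (heavies k j).length ≤ k := by
    rw [heavies, List.length_map]
    calc ((List.finRange k).filter (fun b => b != 0)).length ≤ (List.finRange k).length :=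
          List.length_filter_le _ _
      _ = k := List.length_finRange
  exact_mod_cast h1

lemma cost_buildT (l : List (Fin (4*k))) (x : Fin (4*k*k) → Bool) :
    (buildT k l).costOn (fun _ => (1:ℝ)) x
      ≤ (l.map (fun j => 1 + (k:ℝ) * (if x (be k (j, 0)) then 1 else 0))).sum := by
  induction l with
  | nil =>
    show (0:ℝ) ≤ _
    simp [buildT, DecTree.costOn]
  | cons j rest ih =>
    show (1:ℝ) + (if x (be k (j, 0)) then
        (verifyT (4*k*k) (heavies k j) (buildT k rest)).costOn (fun _ => (1:ℝ)) x
        else (buildT k rest).costOn (fun _ => (1:ℝ)) x) ≤ _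
    rw [List.map_cons, List.sum_cons]
    by_cases h0 : x (be k (j, 0)) = true
    · rw [if_pos (by simpa using h0), if_pos (by simpa using h0)]
      have h1 := cost_verifyT (heavies k j) (buildT k rest) x
      have h2 := heavies_length (k := k) j
      linarith
    · rw [if_neg (by simpa using h0), if_neg (by simpa using h0)]
      linarith

end Tree

section Adaptive
variable {k : ℕ} [NeZero k]

lemma adExp_le (hk : 3 ≤ k) :
    adExpCost (4*k*k) (fun _ => 1) (pvec k) (buildT k (List.finRange (4*k))) ≤ 5*(k:ℝ) := by
  have hK : (3:ℝ) ≤ (k:ℝ) := by exact_mod_cast hk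
  have hK0 : (0:ℝ) < k := by linarith
  have hwnn : ∀ x : Fin (4*k*k) → Bool, 0 ≤ prodWeight (4*k*k) (pvec k) x := by
    intro x
    apply Finset.prod_nonneg
    intro i _
    obtain ⟨hp0, hp1⟩ := pvec_mem hk i
    by_cases hxi : x i = true <;> simp [hxi] <;> linarith
  have hbnd : adExpCost (4*k*k) (fun _ => 1) (pvec k) (buildT k (List.finRange (4*k)))
      ≤ ∑ x : Fin (4*k*k) → Bool, prodWeight (4*k*k) (pvec k) x *
          (∑ j : Fin (4*k), (1 + (k:ℝ) * (if x (be k (j, 0)) then 1 else 0))) := by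
    apply Finset.sum_le_sum
    intro x _
    apply mul_le_mul_of_nonneg_left _ (hwnn x)
    calc (buildT k (List.finRange (4*k))).costOn (fun _ => (1:ℝ)) x
        ≤ ((List.finRange (4*k)).map
            (fun j => 1 + (k:ℝ) * (if x (be k (j, 0)) then 1 else 0))).sum :=
          cost_buildT _ x
      _ = ∑ j : Fin (4*k), (1 + (k:ℝ) * (if x (be k (j, 0)) then 1 else 0)) :=
          (Fin.sum_univ_def _).symm
  have hswap : ∑ x : Fin (4*k*k) → Bool, prodWeight (4*k*k) (pvec k) x *
      (∑ j : Fin (4*k), (1 + (k:ℝ) * (if x (be k (j, 0)) then 1 else 0)))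
      = ∑ j : Fin (4*k), ∑ x : Fin (4*k*k) → Bool, prodWeight (4*k*k) (pvec k) x *
          (1 + (k:ℝ) * (if x (be k (j, 0)) then 1 else 0)) := by
    rw [Finset.sum_congr rfl fun x _ => Finset.mul_sum _ _ _]
    exact Finset.sum_comm
  have hterm : ∀ j : Fin (4*k), ∑ x : Fin (4*k*k) → Bool, prodWeight (4*k*k) (pvec k) x *
      (1 + (k:ℝ) * (if x (be k (j, 0)) then 1 else 0)) = 5/4 := by
    intro j
    have hsplit : ∑ x : Fin (4*k*k) → Bool, prodWeight (4*k*k) (pvec k) x *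
        (1 + (k:ℝ) * (if x (be k (j, 0)) then 1 else 0))
        = (∑ x : Fin (4*k*k) → Bool, prodWeight (4*k*k) (pvec k) x) +
          (k:ℝ) * ∑ x : Fin (4*k*k) → Bool, prodWeight (4*k*k) (pvec k) x *
            (if x (be k (j, 0)) then 1 else 0) := by
      rw [Finset.mul_sum, ← Finset.sum_add_distrib]
      exact Finset.sum_congr rfl fun x _ => by ring
    rw [hsplit, global_mass, global_coord j]
    field_simp
    ring
  calc adExpCost (4*k*k) (fun _ => 1) (pvec k) (buildT k (List.finRange (4*k)))
      ≤ ∑ x : Fin (4*k*k) → Bool, prodWeight (4*k*k) (pvec k) x *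
          (∑ j : Fin (4*k), (1 + (k:ℝ) * (if x (be k (j, 0)) then 1 else 0))) := hbnd
    _ = ∑ j : Fin (4*k), (5/4 : ℝ) := by
        rw [hswap]
        exact Finset.sum_congr rfl fun j _ => hterm j
    _ = 5*(k:ℝ) := by
        rw [Finset.sum_const, Finset.card_univ, Fintype.card_fin]
        push_cast
        ring

lemma OPTA_le (hk : 3 ≤ k) :
    OPTA (4*k*k) (fdnf k) (fun _ => 1) (pvec k) ≤ 5*(k:ℝ) := by
  have hwnn : ∀ x : Fin (4*k*k) → Bool, 0 ≤ prodWeight (4*k*k) (pvec k) x := by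
    intro x
    apply Finset.prod_nonneg
    intro i _
    obtain ⟨hp0, hp1⟩ := pvec_mem hk i
    by_cases hxi : x i = true <;> simp [hxi] <;> linarith
  have hbdd : BddBelow { r : ℝ | ∃ t : DecTree (4*k*k),
      DecTree.Computes t (fdnf k) ∧ r = adExpCost (4*k*k) (fun _ => 1) (pvec k) t } := by
    refine ⟨0, ?_⟩
    rintro r ⟨t, -, rfl⟩
    exact Finset.sum_nonneg fun x _ => mul_nonneg (hwnn x) (costOn_nonneg t x)
  have hmem : adExpCost (4*k*k) (fun _ => 1) (pvec k) (buildT k (List.finRange (4*k)))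
      ∈ { r : ℝ | ∃ t : DecTree (4*k*k),
        DecTree.Computes t (fdnf k) ∧ r = adExpCost (4*k*k) (fun _ => 1) (pvec k) t } :=
    ⟨buildT k (List.finRange (4*k)), buildT_computes, rfl⟩
  exact le_trans (csInf_le hbdd hmem) (adExp_le hk)

end Adaptive

section Final
variable {k : ℕ} [NeZero k]

lemma fdnf_rodnf : IsReadOnceDNF (4*k*k) (4*k) (Tm k) (fdnf k) := by
  refine ⟨?_, ?_, ?_⟩
  · intro j
    exact Finset.Nonempty.image Finset.univ_nonempty _
  · exact fun j1 j2 h => Tm_disj j1 j2 h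
  · intro x
    rw [fdnf, decide_eq_true_iff]
    constructor
    · rintro ⟨j, hA⟩
      refine ⟨j, ?_⟩
      intro i hi
      obtain ⟨b, -, rfl⟩ := Finset.mem_image.1 hi
      exact hA b
    · rintro ⟨j, h⟩
      exact ⟨j, fun b => h _ (Finset.mem_image_of_mem _ (Finset.mem_univ b))⟩

end Final

end SBFE

/-- There is a constant `c > 0` such that for every `k ≥ 3`, with `n = 4k²`, there are a
monotone read-once DNF `f` on `n` variables consisting of `4k` pairwise-disjoint terms of
`k` variables each, and a probability vector `p ∈ (0,1)ⁿ`, such that under unit costs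
`OPT_N(f,p) ≥ c·√n·OPT_A(f,p)`. -/
theorem stmt5 :
    ∃ c : ℝ, 0 < c ∧
      ∀ k : ℕ, 3 ≤ k →
        ∃ (f : (Fin (4 * k * k) → Bool) → Bool)
          (T : Fin (4 * k) → Finset (Fin (4 * k * k)))
          (p : Fin (4 * k * k) → ℝ),
          (∀ j, (T j).card = k) ∧
          IsReadOnceDNF (4 * k * k) (4 * k) T f ∧
          (∀ i, 0 < p i ∧ p i < 1) ∧
          c * Real.sqrt (4 * k * k) * OPTA (4 * k * k) f (fun _ => 1) p ≤
            OPTN (4 * k * k) f (fun _ => 1) p := by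
  refine ⟨1/50, by norm_num, ?_⟩
  intro k hk
  haveI : NeZero k := ⟨by omega⟩
  refine ⟨SBFE.fdnf k, SBFE.Tm k, SBFE.pvec k, fun j => SBFE.Tm_card j, SBFE.fdnf_rodnf,
    fun i => SBFE.pvec_mem hk i, ?_⟩
  have hK : (3:ℝ) ≤ (k:ℝ) := by exact_mod_cast hk
  have hK0 : (0:ℝ) < k := by linarith
  have hs : Real.sqrt (4 * (k:ℝ) * (k:ℝ)) = 2*(k:ℝ) := by
    rw [show (4:ℝ) * (k:ℝ) * (k:ℝ) = (2*(k:ℝ))^2 by ring, Real.sqrt_sq (by positivity)]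
  have hA := SBFE.OPTA_le hk
  have hN := SBFE.OPTN_lb hk
  rw [hs]
  calc (1/50 : ℝ) * (2*(k:ℝ)) * OPTA (4*k*k) (SBFE.fdnf k) (fun _ => 1) (SBFE.pvec k)
      ≤ (1/50 : ℝ) * (2*(k:ℝ)) * (5*(k:ℝ)) := by
        apply mul_le_mul_of_nonneg_left hA (by positivity)
    _ = ((k:ℝ))^2/5 := by ring
    _ ≤ OPTN (4*k*k) (SBFE.fdnf k) (fun _ => 1) (SBFE.pvec k) := hN
end
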